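/- arXiv:2405.20645 — 9 statements merged into one kernel-verified Lean document; each statement's English description precedes it below -/
import Mathlib

section
/- If I is a monomial ideal with the non-pure dual exchange property and m = (x_1,...,x_n) is the graded maximal ideal of S, then the ideal mI also satisfies the non-pure dual exchange property. -/
open MvPolynomial

/-- Total degree of an exponent vector. -/
def expDeg {n : ℕ} (m : Fin n →₀ ℕ) : ℕ := m.sum fun _ e => e

/-- A monomial ideal: an ideal generated by a set of monomials. -/
def IsMonomialIdeal {n : ℕ} {K : Type*} [Field K]
    (I : Ideal (MvPolynomial (Fin n) K)) : Prop :=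
  ∃ A : Set (Fin n →₀ ℕ), I = Ideal.span ((fun m => (monomial m (1 : K))) '' A)

/-- `m` is (the exponent vector of) a minimal monomial generator of `I`. -/
def MinGen {n : ℕ} {K : Type*} [Field K]
    (I : Ideal (MvPolynomial (Fin n) K)) (m : Fin n →₀ ℕ) : Prop :=
  (monomial m (1 : K)) ∈ I ∧
    ∀ m' : Fin n →₀ ℕ, m' ≤ m → m' ≠ m → (monomial m' (1 : K)) ∉ I

/-- The non-pure dual exchange property. -/
def NPDE {n : ℕ} {K : Type*} [Field K]
    (I : Ideal (MvPolynomial (Fin n) K)) : Prop :=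
  ∀ u v : Fin n →₀ ℕ, MinGen I u → MinGen I v → expDeg u ≤ expDeg v →
    ∀ i : Fin n, v i < u i →
      ∃ j : Fin n, u j < v j ∧
        (monomial (v + Finsupp.single i 1 - Finsupp.single j 1) (1 : K)) ∈ I

/-- `I` has linear quotients. -/
def HasLinearQuotients {n : ℕ} {K : Type*} [Field K]
    (I : Ideal (MvPolynomial (Fin n) K)) : Prop :=
  ∃ l : List (Fin n →₀ ℕ), l.Nodup ∧ (∀ m, MinGen I m ↔ m ∈ l) ∧
    ∀ k : Fin l.length, 0 < (k : ℕ) →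
      ∃ V : Set (Fin n),
        Submodule.colon
          (Ideal.span ((fun m => (monomial m (1 : K))) '' {m | m ∈ l.take k}))
          (Ideal.span {monomial (l.get k) (1 : K)})
        = Ideal.span ((fun i => (X i : MvPolynomial (Fin n) K)) '' V)

/-- The monomial prime ideal generated by the variables with index in `J`. -/
noncomputable def mIdeal {n : ℕ} (K : Type*) [Field K] (J : Set (Fin n)) :
    Ideal (MvPolynomial (Fin n) K) :=
  Ideal.span ((fun i => (X i : MvPolynomial (Fin n) K)) '' J)

/-- `I` is weakly polymatroidal with respect to the variable order
`x_{σ 0} > x_{σ 1} > ⋯`. -/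
def WeaklyPolymatroidal {n : ℕ} {K : Type*} [Field K]
    (I : Ideal (MvPolynomial (Fin n) K)) (σ : Equiv.Perm (Fin n)) : Prop :=
  ∀ u v : Fin n →₀ ℕ, MinGen I u → MinGen I v →
    ∀ t : Fin n, (∀ k : Fin n, k < t → u (σ k) = v (σ k)) → v (σ t) < u (σ t) →
      ∃ j : Fin n, t < j ∧ 0 < v (σ j) ∧
        (monomial (v + Finsupp.single (σ t) 1 - Finsupp.single (σ j) 1) (1 : K)) ∈ I

/-- `I` has a `d`-linear (finite free graded) resolution. -/
def HasLinearResolution {n : ℕ} {K : Type*} [Field K]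
    (I : Ideal (MvPolynomial (Fin n) K)) (d : ℕ) : Prop :=
  ∃ (b : ℕ → ℕ) (g : Fin (b 0) → MvPolynomial (Fin n) K)
    (M : ∀ k : ℕ, Matrix (Fin (b k)) (Fin (b (k + 1))) (MvPolynomial (Fin n) K)),
    (∀ i, (g i).IsHomogeneous d) ∧
    Ideal.span (Set.range g) = I ∧
    (∀ k i j, ((M k) i j).IsHomogeneous 1) ∧
    LinearMap.ker (Fintype.linearCombination (MvPolynomial (Fin n) K) g)
      = LinearMap.range (M 0).mulVecLin ∧
    ∀ k, LinearMap.ker (M k).mulVecLin = LinearMap.range (M (k + 1)).mulVecLin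

/-- The ideal generated by the degree-`d` homogeneous elements of `I`. -/
noncomputable def componentIdeal {n : ℕ} {K : Type*} [Field K]
    (I : Ideal (MvPolynomial (Fin n) K)) (d : ℕ) :
    Ideal (MvPolynomial (Fin n) K) :=
  Ideal.span {f | f ∈ I ∧ f.IsHomogeneous d}

/-- `I` is componentwise linear. -/
def ComponentwiseLinear {n : ℕ} {K : Type*} [Field K]
    (I : Ideal (MvPolynomial (Fin n) K)) : Prop :=
  ∀ d : ℕ, HasLinearResolution (componentIdeal I d) d

lemma expDeg_eq {n : ℕ} (m : Fin n →₀ ℕ) : expDeg m = ∑ i, m i :=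
  Finsupp.sum_fintype _ _ (fun _ => rfl)
lemma expDeg_lt {n : ℕ} {a b : Fin n →₀ ℕ} (hle : a ≤ b) (hne : a ≠ b) :
    expDeg a < expDeg b := by
  rw [expDeg_eq, expDeg_eq]
  obtain ⟨i, hi⟩ : ∃ i, a i ≠ b i := by
    by_contra hc; push_neg at hc; exact hne (Finsupp.ext hc)
  exact Finset.sum_lt_sum (fun j _ => Finsupp.le_def.mp hle j)
    ⟨i, Finset.mem_univ i, lt_of_le_of_ne (Finsupp.le_def.mp hle i) hi⟩
lemma expDeg_add_single {n : ℕ} (a : Fin n →₀ ℕ) (t : Fin n) :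
    expDeg (a + Finsupp.single t 1) = expDeg a + 1 := by
  simp [expDeg_eq, Finsupp.single_apply, Finset.sum_add_distrib]
lemma mem_monSpan {n : ℕ} {K : Type*} [Field K] {A : Set (Fin n →₀ ℕ)} {w : Fin n →₀ ℕ} :
    (monomial w (1 : K)) ∈ Ideal.span ((fun m => (monomial m (1 : K))) '' A) ↔ ∃ a ∈ A, a ≤ w := by
  rw [mem_ideal_span_monomial_image]; simp [support_monomial]

lemma exists_minGen {n : ℕ} {K : Type*} [Field K] {I : Ideal (MvPolynomial (Fin n) K)}
    {b : Fin n →₀ ℕ} (hb : (monomial b (1 : K)) ∈ I) : ∃ p, p ≤ b ∧ MinGen I p := by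
  obtain ⟨d, hd⟩ : ∃ d, expDeg b ≤ d := ⟨expDeg b, le_rfl⟩
  induction d generalizing b with
  | zero =>
    refine ⟨b, le_rfl, hb, fun m' hle hne hm' => ?_⟩
    exact absurd (expDeg_lt hle hne) (by omega)
  | succ d ih =>
    by_cases hmin : MinGen I b
    · exact ⟨b, le_rfl, hmin⟩
    · simp only [MinGen, not_and, not_forall, not_not] at hmin
      obtain ⟨b', hle, hne, hb'⟩ := hmin hb
      obtain ⟨p, hp, hpg⟩ := ih hb' (by have := expDeg_lt hle hne; omega)
      exact ⟨p, hp.trans hle, hpg⟩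

lemma mem_mI {n : ℕ} {K : Type*} [Field K] {I : Ideal (MvPolynomial (Fin n) K)}
    (hmon : IsMonomialIdeal I) {w : Fin n →₀ ℕ} :
    (monomial w (1 : K)) ∈ Ideal.span (Set.range (X : Fin n → MvPolynomial (Fin n) K)) * I ↔
      ∃ b t, (monomial b (1 : K)) ∈ I ∧ b + Finsupp.single t 1 ≤ w := by
  obtain ⟨A, hA⟩ := hmon
  have key : Ideal.span (Set.range (X : Fin n → MvPolynomial (Fin n) K)) * I
      = Ideal.span ((fun m => (monomial m (1 : K))) ''
          {m | ∃ a ∈ A, ∃ t, m = Finsupp.single t 1 + a}) := by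
    have hX : Set.range (X : Fin n → MvPolynomial (Fin n) K)
        = (fun m => (monomial m (1 : K))) '' (Set.range fun t : Fin n => Finsupp.single t 1) := by
      ext f; simp [X, Set.range_comp]
    rw [hA, hX, Ideal.span_mul_span']
    congr 1
    ext f
    constructor
    · rintro ⟨-, ⟨-, ⟨t, rfl⟩, rfl⟩, -, ⟨a, ha, rfl⟩, rfl⟩
      exact ⟨Finsupp.single t 1 + a, ⟨a, ha, t, rfl⟩, by simp [monomial_mul]⟩
    · rintro ⟨-, ⟨a, ha, t, rfl⟩, rfl⟩
      exact ⟨monomial (Finsupp.single t 1) 1, ⟨_, ⟨t, rfl⟩, rfl⟩,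
        monomial a 1, ⟨a, ha, rfl⟩, by simp [monomial_mul]⟩
  rw [key, mem_monSpan]
  constructor
  · rintro ⟨-, ⟨a, ha, t, rfl⟩, hle⟩
    exact ⟨a, t, by rw [hA]; exact Ideal.subset_span ⟨a, ha, rfl⟩, by rwa [add_comm]⟩
  · rintro ⟨b, t, hb, hle⟩
    rw [hA, mem_monSpan] at hb
    obtain ⟨a, ha, hab⟩ := hb
    exact ⟨Finsupp.single t 1 + a, ⟨a, ha, t, rfl⟩, le_trans (by rw [add_comm]; exact add_le_add hab le_rfl) hle⟩

lemma mI_mem_of {n : ℕ} {K : Type*} [Field K] {I : Ideal (MvPolynomial (Fin n) K)}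
    (hmon : IsMonomialIdeal I) {c : Fin n →₀ ℕ} (t : Fin n)
    (hc : (monomial c (1 : K)) ∈ I) :
    (monomial (c + Finsupp.single t 1) (1 : K)) ∈
      Ideal.span (Set.range (X : Fin n → MvPolynomial (Fin n) K)) * I :=
  (mem_mI hmon).mpr ⟨c, t, hc, le_rfl⟩

lemma decomp {n : ℕ} {K : Type*} [Field K] {I : Ideal (MvPolynomial (Fin n) K)}
    (hmon : IsMonomialIdeal I) {u : Fin n →₀ ℕ}
    (hu : MinGen (Ideal.span (Set.range (X : Fin n → MvPolynomial (Fin n) K)) * I) u) :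
    ∃ p t, MinGen I p ∧ u = p + Finsupp.single t 1 := by
  obtain ⟨b, t, hb, hle⟩ := (mem_mI hmon).mp hu.1
  obtain ⟨p, hpb, hpg⟩ := exists_minGen hb
  have hle' : p + Finsupp.single t 1 ≤ u := le_trans (add_le_add hpb le_rfl) hle
  have hmem := mI_mem_of hmon t hpg.1
  by_cases heq : p + Finsupp.single t 1 = u
  · exact ⟨p, t, hpg, heq.symm⟩
  · exact absurd hmem (hu.2 _ hle' heq)

lemma transfer {n : ℕ} {K : Type*} [Field K] {I : Ideal (MvPolynomial (Fin n) K)}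
    (hmon : IsMonomialIdeal I) {v : Fin n →₀ ℕ} {j : Fin n}
    (hv : MinGen (Ideal.span (Set.range (X : Fin n → MvPolynomial (Fin n) K)) * I) v)
    (hj : 1 ≤ v j) (hmem : (monomial (v - Finsupp.single j 1) (1 : K)) ∈ I) :
    MinGen I (v - Finsupp.single j 1) := by
  refine ⟨hmem, fun b hble hbne hbI => ?_⟩
  have hadd : v - Finsupp.single j 1 + Finsupp.single j 1 = v := by
    ext x; by_cases hx : j = x
    · subst hx; simp [Finsupp.single_apply]; omega
    · simp [Finsupp.single_apply, hx]
  refine hv.2 (b + Finsupp.single j 1) ?_ ?_ (mI_mem_of hmon j hbI)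
  · rw [← hadd]; exact add_le_add hble le_rfl
  · intro hc
    exact hbne (by apply add_right_cancel (b := Finsupp.single j 1); rw [hc, hadd])

lemma aux1 {n : ℕ} (a : Fin n →₀ ℕ) (s t : Fin n) (h : 1 ≤ a t) :
    a + Finsupp.single s 1 - Finsupp.single t 1 = a - Finsupp.single t 1 + Finsupp.single s 1 := by
  ext x
  simp only [Finsupp.add_apply, Finsupp.tsub_apply, Finsupp.single_apply]
  rcases eq_or_ne t x with rfl | hx
  · split_ifs <;> omega
  · simp only [if_neg hx]; omega


theorem stmt2 {n : ℕ} {K : Type*} [Field K] (I : Ideal (MvPolynomial (Fin n) K))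
    (hmon : IsMonomialIdeal I) (h : NPDE I) :
    NPDE (Ideal.span (Set.range (X : Fin n → MvPolynomial (Fin n) K)) * I) := by
  intro u v hu hv hdeg i hi
  obtain ⟨u', k, hu', hue⟩ := decomp hmon hu
  obtain ⟨v', l, hv', hve⟩ := decomp hmon hv
  have hux : ∀ x, k ≠ x → u x = u' x := by
    intro x hx; rw [hue]; simp [Finsupp.single_apply, hx]
  have huk : u k = u' k + 1 := by rw [hue]; simp
  have hvx : ∀ x, l ≠ x → v x = v' x := by
    intro x hx; rw [hve]; simp [Finsupp.single_apply, hx]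
  have hvl : v l = v' l + 1 := by rw [hve]; simp
  have hdeg' : expDeg u' ≤ expDeg v' := by
    rw [hue, hve, expDeg_add_single, expDeg_add_single] at hdeg; omega
  -- the easy target: if u l < v l we can always use j := l
  have easy : u l < v l → ∃ j : Fin n, u j < v j ∧
      (monomial (v + Finsupp.single i 1 - Finsupp.single j 1) (1 : K)) ∈
        Ideal.span (Set.range (X : Fin n → MvPolynomial (Fin n) K)) * I := by
    intro hlv
    refine ⟨l, hlv, ?_⟩
    have hid : v + Finsupp.single i 1 - Finsupp.single l 1 = v' + Finsupp.single i 1 := by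
      rw [hve, add_right_comm, add_tsub_cancel_right]
    rw [hid]
    exact mI_mem_of hmon i hv'.1
  by_cases hA : v' i < u' i
  · -- Case A
    obtain ⟨j, hj, hwj⟩ := h u' v' hu' hv' hdeg' i hA
    by_cases hjv : u j < v j
    · -- A1
      refine ⟨j, hjv, ?_⟩
      have hid : v + Finsupp.single i 1 - Finsupp.single j 1
          = (v' + Finsupp.single i 1 - Finsupp.single j 1) + Finsupp.single l 1 := by
        rw [hve, add_right_comm, aux1 (v' + Finsupp.single i 1) l j]
        simp only [Finsupp.add_apply, Finsupp.single_apply]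
        split_ifs <;> omega
      rw [hid]
      exact mI_mem_of hmon l hwj
    · -- A2 : u j = v j, forces k = j, l ≠ j
      have hkj : k = j := by
        by_contra hc
        rw [hux j hc] at hjv
        apply hjv
        rcases eq_or_ne l j with rfl | hlj
        · omega
        · rw [hvx j hlj]; omega
      have hlj : l ≠ j := by
        rintro rfl
        rw [hvl, ← hkj, huk, hkj] at hjv
        omega
      have hukvk : u j = v j := by
        rw [← hkj, huk, hkj, hvx j hlj]
        have := not_lt.mp hjv
        rw [← hkj, huk, hkj, hvx j hlj] at this
        omega
      by_cases hlv : u l < v l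
      · exact easy hlv
      · have hvl' : v' l < u' l := by
          have h1 := not_lt.mp hlv
          rw [hux l (by rw [hkj]; exact fun e => hlj e.symm), hvl] at h1
          omega
        obtain ⟨j₂, hj₂, hw₂⟩ := h u' v' hu' hv' hdeg' l hvl'
        by_cases hj₂k : j₂ = k
        · -- deepest branch: v - e_k ∈ I, re-decompose v
          subst hj₂k
          have hvk1 : 1 ≤ v j₂ := by
            rcases eq_or_ne l j₂ with rfl | hlj₂
            · omega
            · rw [hvx j₂ hlj₂]; omega
          have hv''I : (monomial (v - Finsupp.single j₂ 1) (1 : K)) ∈ I := by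
            have hid : v - Finsupp.single j₂ 1
                = v' + Finsupp.single l 1 - Finsupp.single j₂ 1 := by rw [hve]
            rw [hid]; exact hw₂
          have hv'' := transfer hmon hv hvk1 hv''I
          set v'' := v - Finsupp.single j₂ 1 with hv''def
          have hveq : v = v'' + Finsupp.single j₂ 1 :=
            (tsub_add_cancel_of_le (Finsupp.single_le_iff.mpr hvk1)).symm
          have hik : i ≠ j₂ := by
            rintro rfl
            rw [← hkj] at hukvk
            omega
          have hdeg'' : expDeg u' ≤ expDeg v'' := by
            have e1 : expDeg v = expDeg v'' + 1 := by rw [hveq, expDeg_add_single]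
            have e2 : expDeg v = expDeg v' + 1 := by rw [hve, expDeg_add_single]
            omega
          have hv''x : ∀ x, j₂ ≠ x → v'' x = v x := by
            intro x hx
            rw [hv''def]
            simp [Finsupp.single_apply, hx, Finsupp.tsub_apply]
          have hik' : j₂ ≠ i := Ne.symm hik
          have hvi'' : v'' i < u' i := by
            rw [hv''x i hik', ← hux i hik']; exact hi
          obtain ⟨j₃, hj₃, hw₃⟩ := h u' v'' hu' hv'' hdeg'' i hvi''
          refine ⟨j₃, ?_, ?_⟩
          · rcases eq_or_ne j₂ j₃ with rfl | hne
            · have : v j₂ = v'' j₂ + 1 := by rw [hveq]; simp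
              omega
            · have e1 : u j₃ = u' j₃ := hux j₃ hne
              have e2 : v'' j₃ = v j₃ := hv''x j₃ hne
              omega
          · have hid : v + Finsupp.single i 1 - Finsupp.single j₃ 1
                = (v'' + Finsupp.single i 1 - Finsupp.single j₃ 1) + Finsupp.single j₂ 1 := by
              rw [hveq, add_right_comm, aux1 (v'' + Finsupp.single i 1) j₂ j₃]
              simp only [Finsupp.add_apply, Finsupp.single_apply]
              split_ifs <;> omega
            rw [hid]
            exact mI_mem_of hmon j₂ hw₃
        · refine ⟨j₂, ?_, ?_⟩
          · have : u j₂ = u' j₂ := hux j₂ (fun e => hj₂k e.symm)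
            rcases eq_or_ne l j₂ with rfl | hlj₂
            · omega
            · rw [this, hvx j₂ hlj₂]; omega
          · have hid : v + Finsupp.single i 1 - Finsupp.single j₂ 1
                = (v' + Finsupp.single l 1 - Finsupp.single j₂ 1) + Finsupp.single i 1 := by
              rw [hve, aux1 (v' + Finsupp.single l 1) i j₂]
              simp only [Finsupp.add_apply, Finsupp.single_apply]
              split_ifs <;> omega
            rw [hid]
            exact mI_mem_of hmon i hw₂
  · -- Case B : u' i ≤ v' i, forces k = i, v' i = u' i, l ≠ i
    push_neg at hA
    have hki : k = i := by
      by_contra hc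
      rw [hux i hc] at hi
      rcases eq_or_ne l i with rfl | hli
      · omega
      · rw [hvx i hli] at hi; omega
    have hli : l ≠ i := by
      rintro rfl
      rw [hvl, ← hki, huk, hki] at hi
      omega
    have hv'i : v' i = u' i := by
      have h1 : v i = v' i := hvx i hli
      rw [h1, ← hki, huk, hki] at hi
      omega
    by_cases hlv : u l < v l
    · exact easy hlv
    · have hkl : k ≠ l := by rw [hki]; exact fun e => hli e.symm
      have hvl' : v' l < u' l := by
        have h1 := not_lt.mp hlv
        rw [hux l hkl, hvl] at h1
        omega
      obtain ⟨j₂, hj₂, hw₂⟩ := h u' v' hu' hv' hdeg' l hvl'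
      have hj₂i : j₂ ≠ i := by
        rintro rfl
        omega
      refine ⟨j₂, ?_, ?_⟩
      · have : u j₂ = u' j₂ := hux j₂ (by rw [hki]; exact fun e => hj₂i e.symm)
        rcases eq_or_ne l j₂ with rfl | hlj₂
        · omega
        · rw [this, hvx j₂ hlj₂]; omega
      · have hid : v + Finsupp.single i 1 - Finsupp.single j₂ 1
            = (v' + Finsupp.single l 1 - Finsupp.single j₂ 1) + Finsupp.single i 1 := by
          rw [hve, aux1 (v' + Finsupp.single l 1) i j₂]
          simp only [Finsupp.add_apply, Finsupp.single_apply]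
          split_ifs <;> omega
        rw [hid]
        exact mI_mem_of hmon i hw₂
end

section
/- The ideal I = (x_1^2, x_1x_2^2, x_1x_2x_3, x_2^2x_3, x_1x_3^3, x_2x_3^3) in K[x_1,x_2,x_3] satisfies the non-pure dual exchange property, but its square I^2 does not: for u = x_1^3x_3^3 ∈ G(I^2) and v = x_2^4x_3^2 ∈ G(I^2), one has deg_{x_3}(v) < deg_{x_3}(u) and x_3(v/x_2) = x_2^3x_3^3 ∉ I^2. -/
open MvPolynomial

namespace Stmt3Aux

open MvPolynomial Pointwise

abbrev T := ℕ × ℕ × ℕ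

def tget (p : T) : Fin 3 → ℕ :=
  fun i => if i.val = 0 then p.1 else if i.val = 1 then p.2.1 else p.2.2

noncomputable def f3 (p : T) : Fin 3 →₀ ℕ := Finsupp.equivFunOnFinite.symm (tget p)

@[simp] lemma f3_apply (p : T) (i : Fin 3) : f3 p i = tget p i := rfl

def L : List T := [(2,0,0),(1,2,0),(1,1,1),(0,2,1),(1,0,3),(0,1,3)]

def tsum (p : T) : ℕ := p.1 + p.2.1 + p.2.2

lemma tget_add (p q : T) (k : Fin 3) : tget (p + q) k = tget p k + tget q k := by
  unfold tget; split_ifs <;> rfl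

lemma f3_add (p q : T) : f3 (p + q) = f3 p + f3 q := by
  ext k; fin_cases k <;> simp [tget, Prod.fst_add, Prod.snd_add]

lemma le_f3_iff (p : T) (m : Fin 3 →₀ ℕ) : f3 p ≤ m ↔ ∀ k, tget p k ≤ m k := by
  rw [Finsupp.le_def]; simp

lemma expDeg_f3 (p : T) : expDeg (f3 p) = tsum p := by
  unfold expDeg
  rw [Finsupp.sum_fintype _ _ (fun _ => rfl), Fin.sum_univ_three]
  rfl

lemma mono_mem_iff {K : Type*} [Field K] (B : Set (Fin 3 →₀ ℕ)) (m : Fin 3 →₀ ℕ) :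
    (monomial m (1:K)) ∈ Ideal.span ((fun s => monomial s (1:K)) '' B) ↔ ∃ b ∈ B, b ≤ m := by
  classical
  rw [mem_ideal_span_monomial_image]
  simp [support_monomial]

lemma mono_f3 {K : Type*} [Field K] (a b c : ℕ) :
    (monomial (f3 (a,b,c)) (1:K)) = X 0 ^ a * X 1 ^ b * X 2 ^ c := by
  have h : f3 (a,b,c) = Finsupp.single 0 a + Finsupp.single 1 b + Finsupp.single 2 c := by
    ext k; fin_cases k <;> simp [tget, Finsupp.single_apply]
  rw [h]; simp [X_pow_eq_monomial, monomial_mul]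

lemma mono_image_mul {K : Type*} [Field K] (B C : Set (Fin 3 →₀ ℕ)) :
    ((fun m => monomial m (1:K)) '' B) * ((fun m => monomial m (1:K)) '' C)
      = (fun m => monomial m (1:K)) '' (Set.image2 (· + ·) B C) := by
  rw [← Set.image2_mul]
  ext x
  simp only [Set.mem_image2, Set.mem_image]
  constructor
  · rintro ⟨_, ⟨a, ha, rfl⟩, _, ⟨b, hb, rfl⟩, rfl⟩
    exact ⟨a + b, ⟨a, ha, b, hb, rfl⟩, by rw [monomial_mul, one_mul]⟩
  · rintro ⟨_, ⟨a, ha, b, hb, rfl⟩, rfl⟩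
    exact ⟨_, ⟨a, ha, rfl⟩, _, ⟨b, hb, rfl⟩, by rw [monomial_mul, one_mul]⟩

end Stmt3Aux

open Stmt3Aux

theorem stmt3 (K : Type*) [Field K] :
    let I : Ideal (MvPolynomial (Fin 3) K) := Ideal.span
      {X 0 ^ 2, X 0 * X 1 ^ 2, X 0 * X 1 * X 2, X 1 ^ 2 * X 2, X 0 * X 2 ^ 3, X 1 * X 2 ^ 3}
    NPDE I ∧
    MinGen (I ^ 2) (Finsupp.single 0 3 + Finsupp.single 2 3) ∧
    MinGen (I ^ 2) (Finsupp.single 1 4 + Finsupp.single 2 2) ∧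
    ((Finsupp.single 1 4 + Finsupp.single 2 2 : Fin 3 →₀ ℕ) 2
      < (Finsupp.single 0 3 + Finsupp.single 2 3 : Fin 3 →₀ ℕ) 2) ∧
    (X 1 ^ 3 * X 2 ^ 3 : MvPolynomial (Fin 3) K) ∉ I ^ 2 ∧
    ¬ NPDE (I ^ 2) := by
  classical
  intro I
  have hIdef : I = Ideal.span
      {X 0 ^ 2, X 0 * X 1 ^ 2, X 0 * X 1 * X 2, X 1 ^ 2 * X 2, X 0 * X 2 ^ 3, X 1 * X 2 ^ 3} := rfl
  have hgen : ({X 0 ^ 2, X 0 * X 1 ^ 2, X 0 * X 1 * X 2, X 1 ^ 2 * X 2, X 0 * X 2 ^ 3,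
      X 1 * X 2 ^ 3} : Set (MvPolynomial (Fin 3) K))
      = (fun m => monomial m (1:K)) '' (f3 '' {p | p ∈ L}) := by
    have hL : {p | p ∈ L} = ({(2,0,0),(1,2,0),(1,1,1),(0,2,1),(1,0,3),(0,1,3)} : Set T) := by
      ext p; simp [L]
    rw [hL]
    simp only [Set.image_insert_eq, Set.image_singleton, mono_f3]
    simp [pow_zero, pow_one, mul_one, one_mul]
  have hI : I = Ideal.span ((fun m => monomial m (1:K)) '' (f3 '' {p | p ∈ L})) :=
    hIdef.trans (congrArg Ideal.span hgen)
  have memI : ∀ m : Fin 3 →₀ ℕ, (monomial m (1:K)) ∈ I ↔ ∃ p ∈ L, ∀ k, tget p k ≤ m k := by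
    intro m
    rw [hI, mono_mem_iff]
    constructor
    · rintro ⟨b, ⟨p, hp, rfl⟩, hle⟩; exact ⟨p, hp, (le_f3_iff p m).1 hle⟩
    · rintro ⟨p, hp, h⟩; exact ⟨f3 p, ⟨p, hp, rfl⟩, (le_f3_iff p m).2 h⟩
  have memI2 : ∀ m : Fin 3 →₀ ℕ, (monomial m (1:K)) ∈ I ^ 2 ↔
      ∃ p ∈ L, ∃ q ∈ L, ∀ k, tget p k + tget q k ≤ m k := by
    intro m
    rw [pow_two, hI, Ideal.span_mul_span', mono_image_mul, mono_mem_iff]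
    constructor
    · rintro ⟨b, hb, hle⟩
      obtain ⟨a, ha, b', hb', rfl⟩ := Set.mem_image2.1 hb
      obtain ⟨p, hp, rfl⟩ := ha
      obtain ⟨q, hq, rfl⟩ := hb'
      rw [← f3_add] at hle
      refine ⟨p, hp, q, hq, fun k => ?_⟩
      have := (le_f3_iff _ _).1 hle k
      rwa [tget_add] at this
    · rintro ⟨p, hp, q, hq, h⟩
      refine ⟨f3 p + f3 q, Set.mem_image2.2 ⟨f3 p, ⟨p, hp, rfl⟩, f3 q, ⟨q, hq, rfl⟩, rfl⟩, ?_⟩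
      rw [← f3_add, le_f3_iff]
      intro k
      rw [tget_add]; exact h k
  have D1 : ∀ p ∈ L, ∀ q ∈ L, (∀ k : Fin 3, tget p k ≤ tget q k) → p = q := by decide
  have hMG : ∀ m, MinGen I m ↔ ∃ p ∈ L, f3 p = m := by
    intro m
    constructor
    · rintro ⟨hm, hmin⟩
      obtain ⟨p, hp, hle⟩ := (memI m).1 hm
      refine ⟨p, hp, ?_⟩
      by_contra hne
      exact hmin (f3 p) ((le_f3_iff _ _).2 hle) hne ((memI _).2 ⟨p, hp, fun k => le_rfl⟩)
    · rintro ⟨p, hp, rfl⟩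
      refine ⟨(memI _).2 ⟨p, hp, fun k => le_rfl⟩, ?_⟩
      intro m' hle hne hmem
      obtain ⟨q, hq, hle'⟩ := (memI m').1 hmem
      have hqp : q = p := D1 q hq p hp (fun k => (hle' k).trans (Finsupp.le_def.1 hle k))
      subst hqp
      exact hne (le_antisymm hle ((le_f3_iff q m').2 hle'))
  have D2 : ∀ p ∈ L, ∀ q ∈ L, tsum p ≤ tsum q → ∀ i : Fin 3, tget q i < tget p i →
      ∃ j : Fin 3, tget p j < tget q j ∧ ∃ r ∈ L, ∀ k : Fin 3,
        tget r k ≤ tget q k + (if i = k then 1 else 0) - (if j = k then 1 else 0) := by decide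
  have hNPDE : NPDE I := by
    intro u v hu hv hdeg i hi
    obtain ⟨p, hp, rfl⟩ := (hMG u).1 hu
    obtain ⟨q, hq, rfl⟩ := (hMG v).1 hv
    rw [expDeg_f3, expDeg_f3] at hdeg
    obtain ⟨j, hj, r, hr, hler⟩ := D2 p hp q hq hdeg i hi
    refine ⟨j, hj, (memI _).2 ⟨r, hr, fun k => ?_⟩⟩
    rw [Finsupp.tsub_apply, Finsupp.add_apply, f3_apply, Finsupp.single_apply,
      Finsupp.single_apply]
    exact hler k
  have mg2 : ∀ t : T, (∃ p ∈ L, ∃ q ∈ L, ∀ k : Fin 3, tget p k + tget q k ≤ tget t k) →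
      (∀ p ∈ L, ∀ q ∈ L, (∀ k : Fin 3, tget p k + tget q k ≤ tget t k) →
        ∀ k0 : Fin 3, ¬ (tget p k0 + tget q k0 < tget t k0)) →
      MinGen (I ^ 2) (f3 t) := by
    intro t hex hmin
    constructor
    · exact (memI2 _).2 hex
    · intro m' hle hne hmem
      obtain ⟨p, hp, q, hq, hpq⟩ := (memI2 m').1 hmem
      have hne' : ¬ (f3 t ≤ m') := fun h => hne (le_antisymm hle h)
      rw [Finsupp.le_def] at hne'
      push_neg at hne'
      obtain ⟨k0, hk0⟩ := hne'
      have key : ∀ k, tget p k + tget q k ≤ tget t k :=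
        fun k => (hpq k).trans (Finsupp.le_def.1 hle k)
      exact hmin p hp q hq key k0 (lt_of_le_of_lt (hpq k0) hk0)
  have hu0 : (Finsupp.single 0 3 + Finsupp.single 2 3 : Fin 3 →₀ ℕ) = f3 (3,0,3) := by
    ext k; fin_cases k <;> simp [tget, Finsupp.single_apply]
  have hv0 : (Finsupp.single 1 4 + Finsupp.single 2 2 : Fin 3 →₀ ℕ) = f3 (0,4,2) := by
    ext k; fin_cases k <;> simp [tget, Finsupp.single_apply]
  have hmg_u : MinGen (I ^ 2) (f3 (3,0,3)) := mg2 (3,0,3) (by decide) (by decide)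
  have hmg_v : MinGen (I ^ 2) (f3 (0,4,2)) := mg2 (0,4,2) (by decide) (by decide)
  have D4 : ¬ ∃ p ∈ L, ∃ q ∈ L, ∀ k : Fin 3, tget p k + tget q k ≤ tget (0,3,3) k := by decide
  have hnotmem : (monomial (f3 (0,3,3)) (1:K)) ∉ I ^ 2 := by
    intro hmem
    exact D4 ((memI2 _).1 hmem)
  have hx : (X 1 ^ 3 * X 2 ^ 3 : MvPolynomial (Fin 3) K) = monomial (f3 (0,3,3)) 1 := by
    rw [mono_f3]; ring
  refine ⟨hNPDE, hu0 ▸ hmg_u, hv0 ▸ hmg_v, ?_, hx ▸ hnotmem, ?_⟩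
  · rw [hu0, hv0]
    show tget (0,4,2) 2 < tget (3,0,3) 2
    decide
  · intro h
    have hdeg : expDeg (f3 (3,0,3)) ≤ expDeg (f3 (0,4,2)) := by
      rw [expDeg_f3, expDeg_f3]; decide
    have hi : f3 (0,4,2) 2 < f3 (3,0,3) 2 := by
      show tget (0,4,2) 2 < tget (3,0,3) 2; decide
    obtain ⟨j, hj, hmem⟩ := h _ _ hmg_u hmg_v hdeg 2 hi
    have hj1 : j = 1 := by
      fin_cases j
      · exact absurd hj (by show ¬ ((3:ℕ) < 0); decide)
      · rfl
      · exact absurd hj (by show ¬ ((3:ℕ) < 2); decide)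
    subst hj1
    have hw : f3 (0,4,2) + Finsupp.single 2 1 - Finsupp.single 1 1 = f3 (0,3,3) := by
      ext k; fin_cases k <;>
        simp [tget, Finsupp.tsub_apply, Finsupp.add_apply, Finsupp.single_apply]
    rw [hw] at hmem
    exact hnotmem hmem
end

section
/- Let J_1,...,J_s, K ⊆ [n] be nonempty sets such that J_i ∩ J_j = ∩_{t=1}^s J_t for all 1 ≤ i < j ≤ s, and K ∩ J_t = ∅ for all t. Then for any positive integers a_1,...,a_s, b, the monomial ideal I = m_{J_1}^{a_1} ∩ m_{J_2}^{a_2} ∩ ... ∩ m_{J_s}^{a_s} ∩ m_K^b in K[x_1,...,x_n] satisfies the non-pure dual exchange property. -/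
open MvPolynomial

open Classical in
noncomputable def FS {n : ℕ} (Js : Set (Fin n)) : Finset (Fin n) :=
  Finset.univ.filter (· ∈ Js)

@[simp] lemma mem_FS {n : ℕ} {Js : Set (Fin n)} {i : Fin n} : i ∈ FS Js ↔ i ∈ Js := by
  classical simp [FS]

noncomputable def sdeg {n : ℕ} (Js : Set (Fin n)) (m : Fin n →₀ ℕ) : ℕ :=
  ∑ j ∈ FS Js, m j

lemma sdeg_add {n : ℕ} (Js : Set (Fin n)) (m m' : Fin n →₀ ℕ) :
    sdeg Js (m + m') = sdeg Js m + sdeg Js m' := by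
  simp [sdeg, Finset.sum_add_distrib]

lemma sdeg_single_mem {n : ℕ} {Js : Set (Fin n)} {i : Fin n} (h : i ∈ Js) :
    sdeg Js (Finsupp.single i 1) = 1 := by
  rw [sdeg, Finset.sum_eq_single i]
  · simp
  · intro j _ hj; simp [Finsupp.single_apply_eq_zero, Ne.symm hj]
  · intro hi; exact absurd (mem_FS.2 h) hi

lemma sdeg_single_not {n : ℕ} {Js : Set (Fin n)} {i : Fin n} (h : i ∉ Js) :
    sdeg Js (Finsupp.single i 1) = 0 := by
  rw [sdeg, Finset.sum_eq_zero]
  intro j hj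
  have : j ≠ i := by rintro rfl; exact h (mem_FS.1 hj)
  simp [Finsupp.single_apply_eq_zero, Ne.symm this]

/-- The ideal of polynomials all of whose monomials have `Js`-degree at least `a`. -/
def Pid {n : ℕ} (K : Type*) [Field K] (Js : Set (Fin n)) (a : ℕ) :
    Ideal (MvPolynomial (Fin n) K) where
  carrier := {f | ∀ w, coeff w f ≠ 0 → a ≤ sdeg Js w}
  zero_mem' := by intro w hw; simp at hw
  add_mem' := by
    intro f g hf hg w hw
    rw [coeff_add] at hw
    by_cases h : coeff w f = 0
    · exact hg w (by simpa [h] using hw)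
    · exact hf w h
  smul_mem' := by
    intro c f hf w hw
    rw [smul_eq_mul, coeff_mul] at hw
    obtain ⟨p, hp, hne⟩ := Finset.exists_ne_zero_of_sum_ne_zero hw
    have h2 : coeff p.2 f ≠ 0 := fun h => hne (by simp [h])
    calc a ≤ sdeg Js p.2 := hf p.2 h2
    _ ≤ sdeg Js w := by
        rw [← Finset.HasAntidiagonal.mem_antidiagonal.1 hp, sdeg_add]; omega

lemma Pid_mul {n : ℕ} {K : Type*} [Field K] {Js : Set (Fin n)} {a b : ℕ}
    {f g : MvPolynomial (Fin n) K} (hf : f ∈ Pid K Js a) (hg : g ∈ Pid K Js b) :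
    f * g ∈ Pid K Js (a + b) := by
  intro w hw
  rw [coeff_mul] at hw
  obtain ⟨p, hp, hne⟩ := Finset.exists_ne_zero_of_sum_ne_zero hw
  have h1 : coeff p.1 f ≠ 0 := fun h => hne (by simp [h])
  have h2 : coeff p.2 g ≠ 0 := fun h => hne (by simp [h])
  have := hf p.1 h1
  have := hg p.2 h2
  rw [← Finset.HasAntidiagonal.mem_antidiagonal.1 hp, sdeg_add]
  omega

lemma mIdeal_le_Pid {n : ℕ} (K : Type*) [Field K] (Js : Set (Fin n)) :
    mIdeal K Js ≤ Pid K Js 1 := by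
  rw [mIdeal, Ideal.span_le]
  rintro _ ⟨i, hi, rfl⟩
  intro w hw
  rw [coeff_X'] at hw
  split at hw
  · next h => rw [← h, sdeg_single_mem hi]
  · exact absurd rfl hw

lemma mIdeal_pow_le_Pid {n : ℕ} (K : Type*) [Field K] (Js : Set (Fin n)) (a : ℕ) :
    (mIdeal K Js) ^ a ≤ Pid K Js a := by
  induction a with
  | zero => intro f _ w _; exact Nat.zero_le _
  | succ a ih =>
      rw [pow_succ]
      apply Ideal.mul_le.2
      intro f hf g hg
      exact Pid_mul (ih hf) (mIdeal_le_Pid K Js hg)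

lemma mem_mIdeal_pow_iff {n : ℕ} (K : Type*) [Field K] (Js : Set (Fin n)) (a : ℕ)
    (m : Fin n →₀ ℕ) :
    monomial m (1 : K) ∈ (mIdeal K Js) ^ a ↔ a ≤ sdeg Js m := by
  constructor
  · intro h
    exact mIdeal_pow_le_Pid K Js a h m (by simp)
  · intro h
    induction a generalizing m with
    | zero => simp
    | succ a ih =>
        obtain ⟨i, hi, hmi⟩ : ∃ i ∈ FS Js, m i ≠ 0 := by
          by_contra hc
          push_neg at hc
          have h0 : sdeg Js m = 0 := Finset.sum_eq_zero hc
          omega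
        have hle : Finsupp.single i 1 ≤ m := Finsupp.single_le_iff.2 (by omega)
        have hdecomp : (m - Finsupp.single i 1) + Finsupp.single i 1 = m :=
          tsub_add_cancel_of_le hle
        have hs : sdeg Js (m - Finsupp.single i 1) + 1 = sdeg Js m := by
          conv_rhs => rw [← hdecomp]
          rw [sdeg_add, sdeg_single_mem (mem_FS.1 hi)]
        have h1 : monomial (m - Finsupp.single i 1) (1 : K) ∈ (mIdeal K Js) ^ a :=
          ih _ (by omega)
        have h2 : (X i : MvPolynomial (Fin n) K) ∈ mIdeal K Js :=
          Ideal.subset_span ⟨i, mem_FS.1 hi, rfl⟩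
        have heq : monomial m (1 : K) =
            monomial (m - Finsupp.single i 1) (1 : K) * X i := by
          rw [X, monomial_mul, hdecomp, mul_one]
        rw [heq, pow_succ]
        exact Ideal.mul_mem_mul h1 h2

lemma sum_le_neg_one {n : ℕ} (g : Fin n → ℤ) (A : Finset (Fin n)) (i : Fin n)
    (hi : i ∈ A) (hgi : g i ≤ -1) (h : ∀ j ∈ A, j ≠ i → g j ≤ 0) :
    ∑ j ∈ A, g j ≤ -1 := by
  rw [← Finset.add_sum_erase A g hi]
  have h0 : ∑ j ∈ A.erase i, g j ≤ 0 :=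
    Finset.sum_nonpos fun j hj => h j (Finset.mem_of_mem_erase hj) (Finset.ne_of_mem_erase hj)
  omega

theorem stmt4 (K : Type*) [Field K] {n s : ℕ}
    (J : Fin s → Set (Fin n)) (Kset : Set (Fin n))
    (hJne : ∀ t, (J t).Nonempty) (hKne : Kset.Nonempty)
    (hint : ∀ i j : Fin s, i < j → J i ∩ J j = ⋂ t, J t)
    (hdisj : ∀ t, Kset ∩ J t = ∅)
    (a : Fin s → ℕ) (ha : ∀ t, 0 < a t) (b : ℕ) (hb : 0 < b) :
    NPDE ((⨅ t, (mIdeal K (J t)) ^ (a t)) ⊓ (mIdeal K Kset) ^ b) := by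
  intro u v hu hv hdeg i hvi
  classical
  set I := (⨅ t, (mIdeal K (J t)) ^ (a t)) ⊓ (mIdeal K Kset) ^ b with hI
  have hKdisj : ∀ t : Fin s, ∀ j : Fin n, j ∈ Kset → j ∈ J t → False := by
    intro t j h1 h2
    have := hdisj t
    exact absurd (Set.mem_inter h1 h2) (by rw [this]; exact Set.notMem_empty j)
  have memI : ∀ m : Fin n →₀ ℕ, monomial m (1 : K) ∈ I ↔
      ((∀ t, a t ≤ sdeg (J t) m) ∧ b ≤ sdeg Kset m) := by
    intro m
    rw [hI, Submodule.mem_inf]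
    simp only [Submodule.mem_iInf, mem_mIdeal_pow_iff]
  have hmu := (memI u).1 hu.1
  have hmv := (memI v).1 hv.1
  have hexp : ∀ m : Fin n →₀ ℕ, expDeg m = ∑ j : Fin n, m j := by
    intro m; exact Finsupp.sum_fintype _ _ (fun _ => rfl)
  have hui : 0 < u i := lt_of_le_of_lt (Nat.zero_le _) hvi
  -- tightness at u in direction i
  have htightu : (i ∈ Kset ∧ sdeg Kset u = b) ∨ ∃ t, i ∈ J t ∧ sdeg (J t) u = a t := by
    set u' := u - Finsupp.single i 1 with hu'
    have hle : Finsupp.single i 1 ≤ u := Finsupp.single_le_iff.2 hui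
    have hdecomp : u' + Finsupp.single i 1 = u := tsub_add_cancel_of_le hle
    have hne : u' ≠ u := by
      intro h
      have h1 : u' i = u i - 1 := by
        rw [hu', Finsupp.tsub_apply, Finsupp.single_eq_same]
      rw [h] at h1
      omega
    have hnotmem := hu.2 u' tsub_le_self hne
    rw [memI] at hnotmem
    have key : ∀ L : Set (Fin n), sdeg L u' + sdeg L (Finsupp.single i 1) = sdeg L u := by
      intro L; rw [← sdeg_add, hdecomp]
    by_cases hJall : ∀ t, a t ≤ sdeg (J t) u'
    · left
      have hK : sdeg Kset u' < b := by
        by_contra hc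
        exact hnotmem ⟨hJall, by omega⟩
      have hk := key Kset
      by_cases hiK : i ∈ Kset
      · rw [sdeg_single_mem hiK] at hk
        exact ⟨hiK, by have := hmu.2; omega⟩
      · rw [sdeg_single_not hiK] at hk
        have := hmu.2; omega
    · right
      push_neg at hJall
      obtain ⟨t, ht⟩ := hJall
      have hk := key (J t)
      by_cases hit : i ∈ J t
      · rw [sdeg_single_mem hit] at hk
        exact ⟨t, hit, by have := hmu.1 t; omega⟩
      · rw [sdeg_single_not hit] at hk
        have := hmu.1 t; omega
  -- sufficient condition to move a variable
  have hmove : ∀ j : Fin n, 0 < v j →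
      (∀ t, j ∈ J t → sdeg (J t) v = a t → i ∈ J t) →
      (j ∈ Kset → sdeg Kset v = b → i ∈ Kset) →
      monomial (v + Finsupp.single i 1 - Finsupp.single j 1) (1 : K) ∈ I := by
    intro j hvj hJcond hKcond
    have hle : Finsupp.single j 1 ≤ v + Finsupp.single i 1 := by
      refine Finsupp.single_le_iff.2 ?_
      rw [Finsupp.add_apply]
      omega
    set w := v + Finsupp.single i 1 - Finsupp.single j 1 with hw
    have hdecomp : w + Finsupp.single j 1 = v + Finsupp.single i 1 :=
      tsub_add_cancel_of_le hle
    rw [memI]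
    have key : ∀ L : Set (Fin n),
        sdeg L w + sdeg L (Finsupp.single j 1) = sdeg L v + sdeg L (Finsupp.single i 1) := by
      intro L; rw [← sdeg_add, ← sdeg_add, hdecomp]
    constructor
    · intro t
      have hk := key (J t)
      have hvt := hmv.1 t
      by_cases hjt : j ∈ J t
      · rw [sdeg_single_mem hjt] at hk
        by_cases hit : i ∈ J t
        · rw [sdeg_single_mem hit] at hk; omega
        · have hnt : sdeg (J t) v ≠ a t := fun h => hit (hJcond t hjt h)
          rw [sdeg_single_not hit] at hk; omega
      · rw [sdeg_single_not hjt] at hk; omega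
    · have hk := key Kset
      have hvK := hmv.2
      by_cases hjK : j ∈ Kset
      · rw [sdeg_single_mem hjK] at hk
        by_cases hiK : i ∈ Kset
        · rw [sdeg_single_mem hiK] at hk; omega
        · have hnt : sdeg Kset v ≠ b := fun h => hiK (hKcond hjK h)
          rw [sdeg_single_not hiK] at hk; omega
      · rw [sdeg_single_not hjK] at hk; omega
  rcases htightu with ⟨hiK, htK⟩ | ⟨t0, hit0, htJ⟩
  · -- Case A : i ∈ Kset
    obtain ⟨j, hjF, hjuv⟩ : ∃ j ∈ FS Kset, u j < v j := by
      by_contra hc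
      push_neg at hc
      have hsum : sdeg Kset v < sdeg Kset u :=
        Finset.sum_lt_sum hc ⟨i, mem_FS.2 hiK, hvi⟩
      have := hmv.2; omega
    refine ⟨j, hjuv, hmove j (by omega) ?_ ?_⟩
    · intro t hjt _
      exact absurd hjt (fun h => hKdisj t j (mem_FS.1 hjF) h)
    · intro _ _; exact hiK
  · -- Case B : i ∈ J t0, tight
    have hiK' : i ∉ Kset := fun h => hKdisj t0 i h hit0
    by_cases hiC : i ∈ ⋂ t, J t
    · -- B1
      obtain ⟨j, hjF, hjuv⟩ : ∃ j ∈ FS (J t0), u j < v j := by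
        by_contra hc
        push_neg at hc
        have hsum : sdeg (J t0) v < sdeg (J t0) u :=
          Finset.sum_lt_sum hc ⟨i, mem_FS.2 hit0, hvi⟩
        have := hmv.1 t0; omega
      refine ⟨j, hjuv, hmove j (by omega) ?_ ?_⟩
      · intro t _ _; exact Set.mem_iInter.1 hiC t
      · intro hjK _; exact absurd hjK (fun h => hKdisj t0 j h (mem_FS.1 hjF))
    · -- B2
      by_contra hcon
      push_neg at hcon
      have hIntAll : ∀ r r' : Fin s, r ≠ r' → J r ∩ J r' = ⋂ t, J t := by
        intro r r' hne
        rcases lt_or_gt_of_ne hne with h | h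
        · exact hint r r' h
        · rw [Set.inter_comm]; exact hint r' r h
      have hnotJ : ∀ r, r ≠ t0 → i ∉ J r := by
        intro r hr hir
        exact hiC (hIntAll r t0 hr ▸ Set.mem_inter hir hit0)
      have hDcover : ∀ j, u j < v j →
          (j ∈ Kset ∧ sdeg Kset v = b) ∨ ∃ r, r ≠ t0 ∧ j ∈ J r ∧ sdeg (J r) v = a r := by
        intro j hj
        by_contra hc
        push_neg at hc
        refine hcon j hj (hmove j (by omega) ?_ ?_)
        · intro t hjt htv
          by_cases h : t = t0
          · rw [h]; exact hit0
          · exact absurd htv (hc.2 t h hjt)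
        · intro hjK htv
          exact absurd htv (hc.1 hjK)
      set g : Fin n → ℤ := fun j => (v j : ℤ) - u j with hg
      have hcast : ∀ L : Set (Fin n),
          ∑ j ∈ FS L, g j = (sdeg L v : ℤ) - sdeg L u := by
        intro L
        rw [sdeg, sdeg, Nat.cast_sum, Nat.cast_sum, ← Finset.sum_sub_distrib]
      have hDg : ∀ j, 0 < g j ↔ u j < v j := by
        intro j
        have hrfl : g j = (v j : ℤ) - u j := rfl
        omega
      set FC := FS (⋂ t, J t) with hFC
      have hFCJ : ∀ r, FC ⊆ FS (J r) := by
        intro r j hj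
        exact mem_FS.2 (Set.mem_iInter.1 (mem_FS.1 hj) r)
      have hgi : g i ≤ -1 := by
        have hrfl : g i = (v i : ℤ) - u i := rfl
        omega
      have hJt0sum : 0 ≤ ∑ j ∈ FS (J t0), g j := by
        rw [hcast]
        have := hmv.1 t0; omega
      have hsdiffJ : ∀ j ∈ FS (J t0) \ FC, j ≠ i → g j ≤ 0 := by
        intro j hj _
        rw [Finset.mem_sdiff] at hj
        by_contra hpos
        push_neg at hpos
        rcases hDcover j ((hDg j).1 (by omega)) with ⟨hjK, _⟩ | ⟨r, hr, hjr, _⟩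
        · exact hKdisj t0 j hjK (mem_FS.1 hj.1)
        · exact hj.2 (mem_FS.2 (hIntAll r t0 hr ▸ Set.mem_inter hjr (mem_FS.1 hj.1)))
      have hiJFC : i ∈ FS (J t0) \ FC :=
        Finset.mem_sdiff.2 ⟨mem_FS.2 hit0, fun h => hiC (mem_FS.1 h)⟩
      have hsd1 : ∑ j ∈ FS (J t0) \ FC, g j ≤ -1 :=
        sum_le_neg_one g _ i hiJFC hgi hsdiffJ
      have hFCsum : 1 ≤ ∑ j ∈ FC, g j := by
        have hsp := Finset.sum_sdiff (hFCJ t0) (f := g)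
        omega
      set R : Finset (Fin s) :=
        Finset.univ.filter (fun r => r ≠ t0 ∧ sdeg (J r) v = a r) with hR
      have hmemR : ∀ r : Fin s, r ∈ R ↔ (r ≠ t0 ∧ sdeg (J r) v = a r) := by
        intro r; rw [hR]; simp
      have hRne : R.Nonempty := by
        obtain ⟨j, hjC, hgj⟩ : ∃ j ∈ FC, 0 < g j := by
          by_contra hc
          push_neg at hc
          have := Finset.sum_nonpos hc
          omega
        rcases hDcover j ((hDg j).1 hgj) with ⟨hjK, _⟩ | ⟨r, hr, _, htr⟩
        · exact absurd hjK (fun h =>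
            hKdisj t0 j h (Set.mem_iInter.1 (mem_FS.1 hjC) t0))
        · exact ⟨r, (hmemR r).2 ⟨hr, htr⟩⟩
      set U1 : Finset (Fin n) := if sdeg Kset v = b then FS Kset else ∅ with hU1
      set U2 : Finset (Fin n) := R.biUnion (fun r => FS (J r) \ FC) with hU2
      set W : Finset (Fin n) := U1 ∪ U2 ∪ FC with hW
      have hiU1 : i ∉ U1 := by
        rw [hU1]; split
        · exact fun h => hiK' (mem_FS.1 h)
        · exact Finset.notMem_empty i
      have hiU2 : i ∉ U2 := by
        rw [hU2]
        intro h
        obtain ⟨r, hrR, hir⟩ := Finset.mem_biUnion.1 h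
        exact hnotJ r ((hmemR r).1 hrR).1 (mem_FS.1 (Finset.mem_sdiff.1 hir).1)
      have hiW : i ∉ W := by
        rw [hW]
        intro h
        rcases Finset.mem_union.1 h with h | h
        · rcases Finset.mem_union.1 h with h | h
          · exact hiU1 h
          · exact hiU2 h
        · exact hiC (mem_FS.1 h)
      have houtW : ∀ j ∈ Finset.univ \ W, j ≠ i → g j ≤ 0 := by
        intro j hj _
        by_contra hpos
        push_neg at hpos
        rw [Finset.mem_sdiff] at hj
        apply hj.2
        rw [hW]
        rcases hDcover j ((hDg j).1 (by omega)) with ⟨hjK, htK'⟩ | ⟨r, hr, hjr, htr⟩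
        · exact Finset.mem_union.2 (Or.inl (Finset.mem_union.2 (Or.inl
            (by rw [hU1, if_pos htK']; exact mem_FS.2 hjK))))
        · by_cases hjC : j ∈ FC
          · exact Finset.mem_union.2 (Or.inr hjC)
          · refine Finset.mem_union.2 (Or.inl (Finset.mem_union.2 (Or.inr ?_)))
            rw [hU2]
            exact Finset.mem_biUnion.2 ⟨r, (hmemR r).2 ⟨hr, htr⟩,
              Finset.mem_sdiff.2 ⟨mem_FS.2 hjr, hjC⟩⟩
      have hrest : ∑ j ∈ Finset.univ \ W, g j ≤ -1 :=
        sum_le_neg_one g _ i (Finset.mem_sdiff.2 ⟨Finset.mem_univ i, hiW⟩) hgi houtW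
      have htotal : 0 ≤ ∑ j : Fin n, g j := by
        have h3 : (expDeg u : ℤ) ≤ expDeg v := by exact_mod_cast hdeg
        rw [hexp u, hexp v] at h3
        push_cast at h3
        have hrfl : ∑ j : Fin n, g j
            = (∑ j : Fin n, (v j : ℤ)) - ∑ j : Fin n, (u j : ℤ) := by
          rw [← Finset.sum_sub_distrib]
        rw [hrfl]
        linarith
      have hWsplit : ∑ j ∈ Finset.univ \ W, g j + ∑ j ∈ W, g j = ∑ j : Fin n, g j :=
        Finset.sum_sdiff (Finset.subset_univ W)
      have hU1sum : ∑ j ∈ U1, g j ≤ 0 := by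
        rw [hU1]
        split
        · next h => rw [hcast]; have := hmu.2; omega
        · simp
      have hdisjU2 : ∀ r ∈ R, ∀ r' ∈ R, r ≠ r' →
          Disjoint (FS (J r) \ FC) (FS (J r') \ FC) := by
        intro r _ r' _ hne
        rw [Finset.disjoint_left]
        intro j hj hj'
        rw [Finset.mem_sdiff] at hj hj'
        exact hj.2 (mem_FS.2
          (hIntAll r r' hne ▸ Set.mem_inter (mem_FS.1 hj.1) (mem_FS.1 hj'.1)))
      have hU2sum : ∑ j ∈ U2, g j ≤ -(R.card : ℤ) * ∑ j ∈ FC, g j := by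
        rw [hU2, Finset.sum_biUnion hdisjU2]
        have hpiece : ∀ r ∈ R, ∑ j ∈ FS (J r) \ FC, g j ≤ - ∑ j ∈ FC, g j := by
          intro r hrR
          have hsp := Finset.sum_sdiff (hFCJ r) (f := g)
          have hJr : ∑ j ∈ FS (J r), g j ≤ 0 := by
            rw [hcast]
            have h1 := hmu.1 r
            have h2 := ((hmemR r).1 hrR).2
            omega
          omega
        calc ∑ r ∈ R, ∑ j ∈ FS (J r) \ FC, g j
            ≤ ∑ r ∈ R, (- ∑ j ∈ FC, g j) := Finset.sum_le_sum hpiece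
          _ = -(R.card : ℤ) * ∑ j ∈ FC, g j := by
              rw [Finset.sum_const, nsmul_eq_mul]; ring
      have hd12 : Disjoint U1 U2 := by
        rw [Finset.disjoint_left]
        intro j hj1 hj2
        rw [hU1] at hj1
        have hjK : j ∈ Kset := by
          by_cases h : sdeg Kset v = b
          · rw [if_pos h] at hj1; exact mem_FS.1 hj1
          · rw [if_neg h] at hj1; exact absurd hj1 (Finset.notMem_empty j)
        rw [hU2] at hj2
        obtain ⟨r, _, hjr⟩ := Finset.mem_biUnion.1 hj2
        exact hKdisj r j hjK (mem_FS.1 (Finset.mem_sdiff.1 hjr).1)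
      have hd13 : Disjoint (U1 ∪ U2) FC := by
        rw [Finset.disjoint_left]
        intro j hj1 hjC
        rcases Finset.mem_union.1 hj1 with h | h
        · rw [hU1] at h
          have hjK : j ∈ Kset := by
            by_cases hh : sdeg Kset v = b
            · rw [if_pos hh] at h; exact mem_FS.1 h
            · rw [if_neg hh] at h; exact absurd h (Finset.notMem_empty j)
          exact hKdisj t0 j hjK (Set.mem_iInter.1 (mem_FS.1 hjC) t0)
        · rw [hU2] at h
          obtain ⟨r, _, hjr⟩ := Finset.mem_biUnion.1 h
          exact (Finset.mem_sdiff.1 hjr).2 hjC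
      have hWsum : ∑ j ∈ W, g j = ∑ j ∈ U1, g j + ∑ j ∈ U2, g j + ∑ j ∈ FC, g j := by
        rw [hW, Finset.sum_union hd13, Finset.sum_union hd12]
      have hcardR : 1 ≤ (R.card : ℤ) := by
        exact_mod_cast Finset.card_pos.2 hRne
      nlinarith [hFCsum, hU1sum, hU2sum, hrest, htotal, hWsplit, hWsum, hcardR]
end

section
/- For any two subsets J_1, J_2 ⊆ [n] and any positive integers a, b, the ideal I = m_{J_1}^a ∩ m_{J_2}^b in K[x_1,...,x_n] satisfies the non-pure dual exchange property. -/
open MvPolynomial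

/-! ### Auxiliary machinery for `stmt5` -/

open Classical in
/-- Sum of the entries of `m` over the index set `J`. -/
noncomputable def sJ {n : ℕ} (J : Set (Fin n)) (m : Fin n →₀ ℕ) : ℕ :=
  ∑ k, if k ∈ J then m k else 0

lemma sJ_add {n : ℕ} (J : Set (Fin n)) (m m' : Fin n →₀ ℕ) :
    sJ J (m + m') = sJ J m + sJ J m' := by
  classical
  simp only [sJ, Finsupp.add_apply, ← Finset.sum_add_distrib]
  exact Finset.sum_congr rfl fun k _ => by split_ifs <;> simp

open Classical in
lemma sJ_single {n : ℕ} (J : Set (Fin n)) (i : Fin n) :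
    sJ J (Finsupp.single i 1) = if i ∈ J then 1 else 0 := by
  simp only [sJ, Finsupp.single_apply]
  rw [Finset.sum_eq_single i]
  · simp
  · intro k _ hk; simp [Ne.symm hk]
  · simp

lemma sub_add_single {n : ℕ} (m : Fin n →₀ ℕ) (i : Fin n) (h : 1 ≤ m i) :
    m - Finsupp.single i 1 + Finsupp.single i 1 = m := by
  ext k
  simp only [Finsupp.add_apply, Finsupp.tsub_apply, Finsupp.single_apply]
  split_ifs with hk
  · subst hk; omega
  · omega

open Classical in
lemma sJ_sub_single {n : ℕ} (J : Set (Fin n)) (m : Fin n →₀ ℕ) (i : Fin n) (h : 1 ≤ m i) :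
    sJ J (m - Finsupp.single i 1) = sJ J m - (if i ∈ J then 1 else 0) := by
  have h2 := sJ_add J (m - Finsupp.single i 1) (Finsupp.single i 1)
  rw [sub_add_single m i h, sJ_single] at h2
  omega

open Classical in
/-- High `J`-degree implies membership in the power `(mIdeal K J) ^ a`. -/
lemma mem_of_sJ {n : ℕ} {K : Type*} [Field K] (J : Set (Fin n)) (a : ℕ)
    (m : Fin n →₀ ℕ) (h : a ≤ sJ J m) : (monomial m (1:K)) ∈ (mIdeal K J)^a := by
  induction a generalizing m with
  | zero => simp
  | succ a ih =>
    have hex : ∃ i, i ∈ J ∧ 0 < m i := by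
      by_contra hc
      push_neg at hc
      have : sJ J m = 0 := by
        apply Finset.sum_eq_zero
        intro k _
        split_ifs with hk
        · exact Nat.le_antisymm (hc k hk) (Nat.zero_le _)
        · rfl
      omega
    obtain ⟨i, hiJ, him⟩ := hex
    have hrec : (monomial (m - Finsupp.single i 1) (1:K)) ∈ (mIdeal K J)^a := by
      apply ih
      rw [sJ_sub_single J m i him, if_pos hiJ]
      omega
    have heq : (X i : MvPolynomial (Fin n) K) * monomial (m - Finsupp.single i 1) 1
        = monomial m 1 := by
      rw [X, monomial_mul, one_mul, add_comm (Finsupp.single i 1), sub_add_single m i him]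
    rw [pow_succ', ← heq]
    exact Ideal.mul_mem_mul (Ideal.subset_span ⟨i, hiJ, rfl⟩) hrec

open Classical in
/-- Membership of a monomial in `(mIdeal K J) ^ a` forces high `J`-degree. -/
lemma sJ_of_mem {n : ℕ} {K : Type*} [Field K] (J : Set (Fin n)) (a : ℕ)
    (m : Fin n →₀ ℕ) (h : (monomial m (1:K)) ∈ (mIdeal K J)^a) : a ≤ sJ J m := by
  classical
  set R := MvPolynomial (Fin n) K
  set g : Fin n → Polynomial R := fun i =>
    Polynomial.C (X i) * (if i ∈ J then Polynomial.X else 1) with hg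
  set φ : R →ₐ[K] Polynomial R := aeval g with hφ
  have hmap : Ideal.map φ.toRingHom ((mIdeal K J)^a)
      ≤ (Ideal.span {(Polynomial.X : Polynomial R)})^a := by
    rw [Ideal.map_pow]
    apply Ideal.pow_right_mono
    rw [mIdeal, Ideal.map_span, Ideal.span_le]
    rintro _ ⟨_, ⟨i, hiJ, rfl⟩, rfl⟩
    simp only [AlgHom.toRingHom_eq_coe, RingHom.coe_coe]
    show φ (X i) ∈ _
    rw [hφ, aeval_X, hg]
    simp only [if_pos hiJ]
    exact Ideal.mem_span_singleton.mpr ⟨Polynomial.C (X i), mul_comm _ _⟩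
  have hmem : φ (monomial m 1) ∈ (Ideal.span {(Polynomial.X : Polynomial R)})^a :=
    hmap (Ideal.mem_map_of_mem _ h)
  have hcomp : φ (monomial m 1)
      = Polynomial.C ((monomial m 1 : R)) * Polynomial.X ^ (sJ J m) := by
    rw [hφ, aeval_monomial, map_one, one_mul, hg, Finsupp.prod]
    have : ∀ i ∈ m.support,
        (Polynomial.C (X i : R) * (if i ∈ J then Polynomial.X else 1)) ^ m i
        = Polynomial.C ((X i : R) ^ m i) * Polynomial.X ^ (if i ∈ J then m i else 0) := by
      intro i _
      rw [mul_pow, map_pow]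
      congr 1
      split_ifs <;> simp
    rw [Finset.prod_congr rfl this, Finset.prod_mul_distrib, ← map_prod,
      Finset.prod_pow_eq_pow_sum]
    congr 1
    · congr 1
      rw [monomial_eq, map_one, one_mul, Finsupp.prod]
    · congr 1
      rw [sJ]
      apply Finset.sum_subset (Finset.subset_univ _)
      intro k _ hk
      rw [Finsupp.notMem_support_iff] at hk
      simp [hk]
  rw [hcomp] at hmem
  by_contra hlt
  push_neg at hlt
  rw [Ideal.span_singleton_pow, Ideal.mem_span_singleton] at hmem
  obtain ⟨q, hq⟩ := hmem
  have hc := congrArg (fun p => Polynomial.coeff p (sJ J m)) hq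
  rw [Polynomial.coeff_C_mul, Polynomial.coeff_X_pow, if_pos rfl, mul_one] at hc
  rw [mul_comm, Polynomial.coeff_mul_X_pow', if_neg (by omega)] at hc
  exact (one_ne_zero : (1:K) ≠ 0) (monomial_eq_zero.mp hc)

lemma exists_lt_of_sum_le {n : ℕ} {f g : Fin n → ℕ}
    (h : ∑ k, f k ≤ ∑ k, g k) (i : Fin n) (hi : g i < f i) : ∃ j, f j < g j := by
  by_contra hc
  push_neg at hc
  have : ∑ k, g k < ∑ k, f k :=
    Finset.sum_lt_sum (fun k _ => hc k) ⟨i, Finset.mem_univ i, hi⟩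
  omega

open Classical in
lemma sum_split {n : ℕ} (Q : Set (Fin n)) (m : Fin n →₀ ℕ) :
    ∑ k, m k = sJ Q m + ∑ k, (if k ∈ Q then 0 else m k) := by
  rw [sJ, ← Finset.sum_add_distrib]
  exact Finset.sum_congr rfl fun k _ => by split_ifs <;> simp

open Classical in
/-- The combinatorial heart of the exchange property. -/
lemma exchange_aux {n : ℕ} (u v : Fin n →₀ ℕ) (P Q : Set (Fin n)) (p q : ℕ)
    (hdeg : (∑ k, u k) ≤ ∑ k, v k)
    (i : Fin n) (hi : v i < u i) (hiP : i ∈ P)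
    (hvP : p ≤ sJ P v) (huQ : q ≤ sJ Q u) (hvQ : q ≤ sJ Q v) :
    ∃ j, u j < v j ∧
      p ≤ sJ P (v + Finsupp.single i 1 - Finsupp.single j 1) ∧
      q ≤ sJ Q (v + Finsupp.single i 1 - Finsupp.single j 1) := by
  have hw : ∀ (R : Set (Fin n)) (j : Fin n), u j < v j →
      sJ R (v + Finsupp.single i 1 - Finsupp.single j 1)
        = sJ R v + (if i ∈ R then 1 else 0) - (if j ∈ R then 1 else 0) := by
    intro R j hj
    have hji : j ≠ i := fun h => by subst h; omega
    have h1 : 1 ≤ ((v + Finsupp.single i 1 : Fin n →₀ ℕ)) j := by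
      simp only [Finsupp.add_apply, Finsupp.single_apply, if_neg (Ne.symm hji)]
      omega
    rw [sJ_sub_single R _ j h1, sJ_add, sJ_single]
  by_cases hcase : q + 1 ≤ sJ Q v + (if i ∈ Q then 1 else 0)
  · obtain ⟨j, hj⟩ := exists_lt_of_sum_le hdeg i hi
    refine ⟨j, hj, ?_, ?_⟩
    · rw [hw P j hj, if_pos hiP]
      have : (if j ∈ P then 1 else 0) ≤ 1 := by split_ifs <;> omega
      omega
    · rw [hw Q j hj]
      have : (if j ∈ Q then 1 else 0) ≤ 1 := by split_ifs <;> omega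
      omega
  · have hiQ : i ∉ Q := by
      intro h
      rw [if_pos h] at hcase; omega
    have hvQ' : sJ Q v = q := by rw [if_neg hiQ] at hcase; omega
    have hsum : ∑ k, (if k ∈ Q then 0 else u k) ≤ ∑ k, (if k ∈ Q then 0 else v k) := by
      have h1 := sum_split Q u
      have h2 := sum_split Q v
      omega
    obtain ⟨j, hj⟩ := exists_lt_of_sum_le hsum i (by rw [if_neg hiQ, if_neg hiQ]; exact hi)
    have hjQ : j ∉ Q := by
      intro h; rw [if_pos h, if_pos h] at hj; omega
    rw [if_neg hjQ, if_neg hjQ] at hj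
    refine ⟨j, hj, ?_, ?_⟩
    · rw [hw P j hj, if_pos hiP]
      have : (if j ∈ P then 1 else 0) ≤ 1 := by split_ifs <;> omega
      omega
    · rw [hw Q j hj, if_neg hiQ, if_neg hjQ]
      omega


theorem stmt5 (K : Type*) [Field K] {n : ℕ} (J1 J2 : Set (Fin n))
    (a b : ℕ) (ha : 0 < a) (hb : 0 < b) :
    NPDE ((mIdeal K J1) ^ a ⊓ (mIdeal K J2) ^ b) := by
  classical
  intro u v hu hv hdeg i hi
  have memI : ∀ m : Fin n →₀ ℕ,
      (monomial m (1:K)) ∈ (mIdeal K J1) ^ a ⊓ (mIdeal K J2) ^ b ↔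
        (a ≤ sJ J1 m ∧ b ≤ sJ J2 m) := by
    intro m
    rw [Submodule.mem_inf]
    constructor
    · rintro ⟨h1, h2⟩
      exact ⟨sJ_of_mem J1 a m h1, sJ_of_mem J2 b m h2⟩
    · rintro ⟨h1, h2⟩
      exact ⟨mem_of_sJ J1 a m h1, mem_of_sJ J2 b m h2⟩
  have hu1 := (memI u).1 hu.1
  have hv1 := (memI v).1 hv.1
  have hdeg' : (∑ k, u k) ≤ ∑ k, v k := by
    have e1 : expDeg u = ∑ k, u k := Finsupp.sum_fintype _ _ (fun _ => rfl)
    have e2 : expDeg v = ∑ k, v k := Finsupp.sum_fintype _ _ (fun _ => rfl)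
    omega
  have hui : 1 ≤ u i := by omega
  set u' := u - Finsupp.single i 1 with hu'
  have hle : u' ≤ u := by
    rw [Finsupp.le_def]
    intro k
    simp only [hu', Finsupp.tsub_apply]
    omega
  have hne : u' ≠ u := by
    intro h
    have := congrArg (fun f : Fin n →₀ ℕ => f i) h
    simp only [hu', Finsupp.tsub_apply, Finsupp.single_eq_same] at this
    omega
  have hnot := hu.2 u' hle hne
  rw [memI] at hnot
  have hs1 : sJ J1 u' = sJ J1 u - (if i ∈ J1 then 1 else 0) := sJ_sub_single _ _ _ hui
  have hs2 : sJ J2 u' = sJ J2 u - (if i ∈ J2 then 1 else 0) := sJ_sub_single _ _ _ hui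
  rcases not_and_or.mp hnot with h | h
  · push_neg at h
    have hiJ1 : i ∈ J1 := by
      by_contra hc
      rw [if_neg hc] at hs1
      omega
    obtain ⟨j, hj, hP, hQ⟩ := exchange_aux u v J1 J2 a b hdeg' i hi hiJ1 hv1.1 hu1.2 hv1.2
    exact ⟨j, hj, (memI _).2 ⟨hP, hQ⟩⟩
  · push_neg at h
    have hiJ2 : i ∈ J2 := by
      by_contra hc
      rw [if_neg hc] at hs2
      omega
    obtain ⟨j, hj, hP, hQ⟩ := exchange_aux u v J2 J1 b a hdeg' i hi hiJ2 hv1.2 hu1.1 hv1.1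
    exact ⟨j, hj, (memI _).2 ⟨hQ, hP⟩⟩
end

section
/- Let I = (x_1,x_2) ∩ (x_2,x_3,x_4) ∩ (x_4,x_5) in K[x_1,...,x_5]. Then I does not satisfy the non-pure dual exchange property: taking u = x_2x_5 and v = x_1x_4 in G(I), one has deg(u) = deg(v) and deg_{x_5}(v) < deg_{x_5}(u), but neither x_1x_5 nor x_4x_5 belongs to I. -/
open MvPolynomial

lemma mono_mem_mIdeal {n : ℕ} {K : Type*} [Field K] (J : Set (Fin n)) (m : Fin n →₀ ℕ) :
    (monomial m (1 : K)) ∈ mIdeal K J ↔ ∃ i ∈ J, m i ≠ 0 := by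
  have : (fun i => (X i : MvPolynomial (Fin n) K)) '' J = MvPolynomial.X '' J := rfl
  rw [mIdeal, this, mem_ideal_span_X_image]
  constructor
  · intro h
    exact h m (by simp [mem_support_iff])
  · intro h m' hm'
    have : m = m' := by
      simpa [support_monomial] using hm'
    exact this ▸ h

set_option maxHeartbeats 1000000 in
theorem stmt6 (K : Type*) [Field K] :
    let I : Ideal (MvPolynomial (Fin 5) K) :=
      mIdeal K {0, 1} ⊓ mIdeal K {1, 2, 3} ⊓ mIdeal K {3, 4}
    let u : Fin 5 →₀ ℕ := Finsupp.single 1 1 + Finsupp.single 4 1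
    let v : Fin 5 →₀ ℕ := Finsupp.single 0 1 + Finsupp.single 3 1
    ¬ NPDE I ∧ MinGen I u ∧ MinGen I v ∧ expDeg u = expDeg v ∧ v 4 < u 4 ∧
    (X 0 * X 4 : MvPolynomial (Fin 5) K) ∉ I ∧
    (X 3 * X 4 : MvPolynomial (Fin 5) K) ∉ I := by
  intro I u v
  have hu : ∀ i, u i = Finsupp.single (1 : Fin 5) 1 i + Finsupp.single 4 1 i := fun i => rfl
  have hv : ∀ i, v i = Finsupp.single (0 : Fin 5) 1 i + Finsupp.single 3 1 i := fun i => rfl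
  have memI : ∀ m : Fin 5 →₀ ℕ, monomial m (1 : K) ∈ I ↔
      ((∃ i ∈ ({0, 1} : Set (Fin 5)), m i ≠ 0) ∧
       (∃ i ∈ ({1, 2, 3} : Set (Fin 5)), m i ≠ 0) ∧
       (∃ i ∈ ({3, 4} : Set (Fin 5)), m i ≠ 0)) := by
    intro m
    show monomial m (1 : K) ∈ mIdeal K {0, 1} ⊓ mIdeal K {1, 2, 3} ⊓ mIdeal K {3, 4} ↔ _
    rw [Ideal.mem_inf, Ideal.mem_inf, mono_mem_mIdeal, mono_mem_mIdeal, mono_mem_mIdeal,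
      and_assoc]
  have hdegf : ∀ m : Fin 5 →₀ ℕ, expDeg m = ∑ i, m i := fun m =>
    Finsupp.sum_fintype _ _ (fun _ => rfl)
  have huMG : MinGen I u := by
    constructor
    · rw [memI]
      refine ⟨⟨1, by simp, by simp [hu]⟩, ⟨1, by simp, by simp [hu]⟩,
        ⟨4, by simp, by simp [hu, Finsupp.single_apply]⟩⟩
    · intro m' hle hne hmem
      rw [memI] at hmem
      obtain ⟨h1, h2, h3⟩ := hmem
      have hle' : ∀ i, m' i ≤ u i := fun i => hle i
      have e0 : m' 0 = 0 := Nat.le_zero.mp (by simpa [hu, Finsupp.single_apply] using hle' 0)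
      have e2 : m' 2 = 0 := Nat.le_zero.mp (by simpa [hu, Finsupp.single_apply] using hle' 2)
      have e3 : m' 3 = 0 := Nat.le_zero.mp (by simpa [hu, Finsupp.single_apply] using hle' 3)
      have e1 : m' 1 ≤ 1 := by simpa [hu, Finsupp.single_apply] using hle' 1
      have e4 : m' 4 ≤ 1 := by simpa [hu, Finsupp.single_apply] using hle' 4
      have hne14 : m' 1 = 0 ∨ m' 4 = 0 := by
        by_contra hc
        push_neg at hc
        apply hne
        ext i
        fin_cases i <;> simp_all [hu, Finsupp.single_apply] <;> omega
      rcases hne14 with h | h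
      · obtain ⟨i, hi, hiv⟩ := h1
        simp only [Set.mem_insert_iff, Set.mem_singleton_iff] at hi
        rcases hi with rfl | rfl <;> simp_all
      · obtain ⟨i, hi, hiv⟩ := h3
        simp only [Set.mem_insert_iff, Set.mem_singleton_iff] at hi
        rcases hi with rfl | rfl <;> simp_all
  have hvMG : MinGen I v := by
    constructor
    · rw [memI]
      refine ⟨⟨0, by simp, by simp [hv]⟩, ⟨3, by simp, by simp [hv, Finsupp.single_apply]⟩,
        ⟨3, by simp, by simp [hv, Finsupp.single_apply]⟩⟩
    · intro m' hle hne hmem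
      rw [memI] at hmem
      obtain ⟨h1, h2, h3⟩ := hmem
      have hle' : ∀ i, m' i ≤ v i := fun i => hle i
      have e1 : m' 1 = 0 := Nat.le_zero.mp (by simpa [hv, Finsupp.single_apply] using hle' 1)
      have e2 : m' 2 = 0 := Nat.le_zero.mp (by simpa [hv, Finsupp.single_apply] using hle' 2)
      have e4 : m' 4 = 0 := Nat.le_zero.mp (by simpa [hv, Finsupp.single_apply] using hle' 4)
      have e0 : m' 0 ≤ 1 := by simpa [hv, Finsupp.single_apply] using hle' 0
      have e3 : m' 3 ≤ 1 := by simpa [hv, Finsupp.single_apply] using hle' 3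
      have hne03 : m' 0 = 0 ∨ m' 3 = 0 := by
        by_contra hc
        push_neg at hc
        apply hne
        ext i
        fin_cases i <;> simp_all [hv, Finsupp.single_apply] <;> omega
      rcases hne03 with h | h
      · obtain ⟨i, hi, hiv⟩ := h1
        simp only [Set.mem_insert_iff, Set.mem_singleton_iff] at hi
        rcases hi with rfl | rfl <;> simp_all
      · obtain ⟨i, hi, hiv⟩ := h3
        simp only [Set.mem_insert_iff, Set.mem_singleton_iff] at hi
        rcases hi with rfl | rfl <;> simp_all
  have hdeg : expDeg u = expDeg v := by
    rw [hdegf, hdegf, Fin.sum_univ_five, Fin.sum_univ_five]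
    simp [hu, hv, Finsupp.single_apply]
  have hv4u4 : v 4 < u 4 := by simp [hu, hv, Finsupp.single_apply]
  have hx04 : (X 0 * X 4 : MvPolynomial (Fin 5) K) ∉ I := by
    have hmono : (X 0 * X 4 : MvPolynomial (Fin 5) K)
        = monomial (Finsupp.single 0 1 + Finsupp.single 4 1) 1 := by
      rw [X, X, monomial_mul, one_mul]
    rw [hmono, memI]
    rintro ⟨-, ⟨i, hi, hiv⟩, -⟩
    simp only [Set.mem_insert_iff, Set.mem_singleton_iff] at hi
    rcases hi with rfl | rfl | rfl <;> simp [Finsupp.single_apply] at hiv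
  have hx34 : (X 3 * X 4 : MvPolynomial (Fin 5) K) ∉ I := by
    have hmono : (X 3 * X 4 : MvPolynomial (Fin 5) K)
        = monomial (Finsupp.single 3 1 + Finsupp.single 4 1) 1 := by
      rw [X, X, monomial_mul, one_mul]
    rw [hmono, memI]
    rintro ⟨⟨i, hi, hiv⟩, -, -⟩
    simp only [Set.mem_insert_iff, Set.mem_singleton_iff] at hi
    rcases hi with rfl | rfl <;> simp [Finsupp.single_apply] at hiv
  refine ⟨?_, huMG, hvMG, hdeg, hv4u4, hx04, hx34⟩
  intro h
  obtain ⟨j, hj, hmem⟩ := h u v huMG hvMG (le_of_eq hdeg) 4 hv4u4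
  rw [memI] at hmem
  have hwi : ∀ i : Fin 5, (v + Finsupp.single 4 1 - Finsupp.single j 1 : Fin 5 →₀ ℕ) i
      = v i + (Finsupp.single (4 : Fin 5) 1) i - (Finsupp.single j 1) i := fun i => rfl
  rw [hu, hv] at hj
  simp only [Finsupp.single_apply] at hj
  fin_cases j <;>
    simp (config := { decide := true }) only [] at hj
  · -- j = 0
    obtain ⟨⟨i, hi, hiv⟩, -, -⟩ := hmem
    simp only [Set.mem_insert_iff, Set.mem_singleton_iff] at hi
    rcases hi with rfl | rfl <;>
      simp (config := { decide := true }) [hwi, hv, Finsupp.single_apply] at hiv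
  · -- j = 3
    obtain ⟨-, ⟨i, hi, hiv⟩, -⟩ := hmem
    simp only [Set.mem_insert_iff, Set.mem_singleton_iff] at hi
    rcases hi with rfl | rfl | rfl <;>
      simp (config := { decide := true }) [hwi, hv, Finsupp.single_apply] at hiv
end

section
/- Let J_1, J_2, J_3 ⊆ [n] with J_1 ∩ J_3 = ∅. Then for any positive integers a_1 ≥ a_2 ≥ a_3, the ideal I = m_{J_1}^{a_1} ∩ m_{J_2}^{a_2} ∩ m_{J_3}^{a_3} in K[x_1,...,x_n] is weakly polymatroidal (with respect to a suitable total order on the variables). -/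
open MvPolynomial

open scoped Classical

noncomputable section AuxWPM
variable {n : ℕ} {K : Type*} [Field K]

def wdeg (J : Set (Fin n)) (m : Fin n →₀ ℕ) : ℕ := ∑ i, if i ∈ J then m i else 0

lemma wdeg_mono {J : Set (Fin n)} {m m' : Fin n →₀ ℕ} (h : m ≤ m') : wdeg J m ≤ wdeg J m' := by
  refine Finset.sum_le_sum fun i _ => ?_
  by_cases hi : i ∈ J <;> simp [hi, h i]

lemma wdeg_add (J : Set (Fin n)) (m m' : Fin n →₀ ℕ) :
    wdeg J (m + m') = wdeg J m + wdeg J m' := by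
  rw [wdeg, wdeg, wdeg, ← Finset.sum_add_distrib]
  refine Finset.sum_congr rfl fun i _ => ?_
  by_cases hi : i ∈ J <;> simp [hi]

lemma wdeg_single (J : Set (Fin n)) (i : Fin n) (e : ℕ) :
    wdeg J (Finsupp.single i e) = if i ∈ J then e else 0 := by
  rw [wdeg, Finset.sum_eq_single i]
  · simp
  · intro b _ hb
    rw [Finsupp.single_eq_of_ne' (Ne.symm hb)]
    simp
  · simp

lemma X_mem_mIdeal {J : Set (Fin n)} {i : Fin n} (hi : i ∈ J) :
    (X i : MvPolynomial (Fin n) K) ∈ mIdeal K J :=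
  Ideal.subset_span ⟨i, hi, rfl⟩

lemma pow_mIdeal_le (J : Set (Fin n)) (a : ℕ) : (mIdeal K J) ^ a ≤
    Ideal.span ((fun s => monomial s (1 : K)) '' {m | a ≤ wdeg J m}) := by
  induction a with
  | zero =>
    rw [pow_zero, Ideal.one_eq_top, ← Ideal.span_singleton_one]
    refine Ideal.span_mono ?_
    intro x hx
    rw [Set.mem_singleton_iff] at hx
    exact ⟨0, by simp, by simp [hx, monomial_zero']⟩
  | succ a ih =>
    rw [pow_succ]
    calc (mIdeal K J) ^ a * mIdeal K J
        ≤ Ideal.span ((fun s => monomial s (1 : K)) '' {m | a ≤ wdeg J m}) * mIdeal K J :=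
          Ideal.mul_mono_left ih
      _ ≤ _ := by
          rw [mIdeal, Ideal.span_mul_span']
          refine Ideal.span_le.mpr ?_
          rintro x ⟨y, ⟨s, hs, rfl⟩, z, ⟨i, hi, rfl⟩, rfl⟩
          show (monomial s (1:K)) * X i ∈ _
          have heq : (monomial s (1:K)) * X i = monomial (s + Finsupp.single i 1) 1 := by
            rw [X, monomial_mul, mul_one]
          rw [heq]
          refine Ideal.subset_span ⟨s + Finsupp.single i 1, ?_, rfl⟩
          have := wdeg_add J s (Finsupp.single i 1)
          rw [wdeg_single, if_pos hi] at this
          simp only [Set.mem_setOf_eq] at hs ⊢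
          omega

lemma monomial_mem_pow_iff (J : Set (Fin n)) (a : ℕ) (m : Fin n →₀ ℕ) :
    (monomial m (1 : K)) ∈ (mIdeal K J) ^ a ↔ a ≤ wdeg J m := by
  constructor
  · intro h
    have := mem_ideal_span_monomial_image.mp (pow_mIdeal_le J a h) m ?_
    · obtain ⟨s, hs, hsm⟩ := this
      exact le_trans hs (wdeg_mono hsm)
    · simp [MvPolynomial.support_monomial]
  · intro h
    induction a generalizing m with
    | zero => simp
    | succ a ih =>
      have hpos : 0 < wdeg J m := lt_of_lt_of_le (Nat.succ_pos a) h
      obtain ⟨i, _, hi⟩ := Finset.exists_lt_of_sum_lt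
        (by simpa [wdeg] using hpos : ∑ _i : Fin n, (0:ℕ) < ∑ i, if i ∈ J then m i else 0)
      have hiJ : i ∈ J := by by_contra hiJ; simp [hiJ] at hi
      have him : 0 < m i := by simpa [hiJ] using hi
      have hsle : Finsupp.single i 1 ≤ m := Finsupp.single_le_iff.mpr him
      have key : m - Finsupp.single i 1 + Finsupp.single i 1 = m := tsub_add_cancel_of_le hsle
      have hw : a ≤ wdeg J (m - Finsupp.single i 1) := by
        have h2 := wdeg_add J (m - Finsupp.single i 1) (Finsupp.single i 1)
        rw [key, wdeg_single, if_pos hiJ] at h2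
        omega
      have hmm : (monomial m (1:K)) = monomial (m - Finsupp.single i 1) 1 * X i := by
        rw [X, monomial_mul, mul_one, key]
      rw [hmm, pow_succ]
      exact Ideal.mul_mem_mul (ih _ hw) (X_mem_mIdeal hiJ)

/-- region rank for the variable order -/
def rkAux {n : ℕ} (J1 J2 J3 : Set (Fin n)) (i : Fin n) : ℕ :=
  if i ∈ J1 then (if i ∈ J2 then 0 else 1)
  else if i ∈ J2 then (if i ∈ J3 then 2 else 3)
  else if i ∈ J3 then 4 else 5

end AuxWPM

theorem stmt7 (K : Type*) [Field K] {n : ℕ} (J1 J2 J3 : Set (Fin n))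
    (h13 : J1 ∩ J3 = ∅) (a1 a2 a3 : ℕ)
    (h3 : 0 < a3) (h32 : a3 ≤ a2) (h21 : a2 ≤ a1) :
    ∃ σ : Equiv.Perm (Fin n),
      WeaklyPolymatroidal ((mIdeal K J1) ^ a1 ⊓ (mIdeal K J2) ^ a2 ⊓ (mIdeal K J3) ^ a3) σ := by
  classical
  set I := (mIdeal K J1) ^ a1 ⊓ (mIdeal K J2) ^ a2 ⊓ (mIdeal K J3) ^ a3 with hI
  have h13' : ∀ i : Fin n, i ∈ J1 → i ∈ J3 → False := fun i h1 h3 =>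
    Set.eq_empty_iff_forall_notMem.mp h13 i ⟨h1, h3⟩
  have memI : ∀ m : Fin n →₀ ℕ, (monomial m (1:K)) ∈ I ↔
      a1 ≤ wdeg J1 m ∧ a2 ≤ wdeg J2 m ∧ a3 ≤ wdeg J3 m := by
    intro m
    rw [hI]
    simp only [Submodule.mem_inf, monomial_mem_pow_iff]
    tauto
  -- rank facts
  have hJ1 : ∀ i, i ∈ J1 ↔ (rkAux J1 J2 J3 i = 0 ∨ rkAux J1 J2 J3 i = 1) := by
    intro i; unfold rkAux; split_ifs <;> simp_all
  have hJ2 : ∀ i, i ∈ J2 ↔ (rkAux J1 J2 J3 i = 0 ∨ rkAux J1 J2 J3 i = 2 ∨ rkAux J1 J2 J3 i = 3) := by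
    intro i; unfold rkAux; split_ifs <;> simp_all
  have hJ3 : ∀ i, i ∈ J3 ↔ (rkAux J1 J2 J3 i = 2 ∨ rkAux J1 J2 J3 i = 4) := by
    intro i; unfold rkAux
    by_cases p1 : i ∈ J1
    · have : i ∉ J3 := fun hi3 => h13' i p1 hi3
      split_ifs <;> simp_all
    · split_ifs <;> simp_all
  set σ := Tuple.sort (rkAux J1 J2 J3) with hσ
  have hmono : ∀ {k j : Fin n}, k ≤ j → rkAux J1 J2 J3 (σ k) ≤ rkAux J1 J2 J3 (σ j) :=
    fun {k j} h => Tuple.monotone_sort (rkAux J1 J2 J3) h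
  refine ⟨σ, ?_⟩
  intro u v hu hv t hpre hlt
  set c := σ t with hc
  -- basic membership facts
  have Pu := (memI u).mp hu.1
  have Pv := (memI v).mp hv.1
  -- tightness from minimality
  have tightfact : ∀ (w : Fin n →₀ ℕ), MinGen I w → ∀ d, 0 < w d →
      (d ∈ J1 ∧ wdeg J1 w = a1) ∨ (d ∈ J2 ∧ wdeg J2 w = a2) ∨ (d ∈ J3 ∧ wdeg J3 w = a3) := by
    intro w hw d hd
    have hle : w - Finsupp.single d 1 ≤ w := tsub_le_self
    have hne : w - Finsupp.single d 1 ≠ w := by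
      intro h
      have := congrArg (fun f : Fin n →₀ ℕ => f d) h
      simp [Finsupp.tsub_apply] at this
      omega
    have hsle : Finsupp.single d 1 ≤ w := Finsupp.single_le_iff.mpr hd
    have key : w - Finsupp.single d 1 + Finsupp.single d 1 = w := tsub_add_cancel_of_le hsle
    have Pw := (memI w).mp hw.1
    have hw1 : wdeg J1 (w - Finsupp.single d 1) + (if d ∈ J1 then 1 else 0) = wdeg J1 w := by
      conv_rhs => rw [← key]
      rw [wdeg_add, wdeg_single]
    have hw2 : wdeg J2 (w - Finsupp.single d 1) + (if d ∈ J2 then 1 else 0) = wdeg J2 w := by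
      conv_rhs => rw [← key]
      rw [wdeg_add, wdeg_single]
    have hw3 : wdeg J3 (w - Finsupp.single d 1) + (if d ∈ J3 then 1 else 0) = wdeg J3 w := by
      conv_rhs => rw [← key]
      rw [wdeg_add, wdeg_single]
    by_contra hcon
    push_neg at hcon
    obtain ⟨hc1, hc2, hc3⟩ := hcon
    refine hw.2 _ hle hne ((memI _).mpr ⟨?_, ?_, ?_⟩)
    · by_cases hd1 : d ∈ J1
      · have := hc1 hd1; rw [if_pos hd1] at hw1; omega
      · rw [if_neg hd1] at hw1; omega
    · by_cases hd2 : d ∈ J2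
      · have := hc2 hd2; rw [if_pos hd2] at hw2; omega
      · rw [if_neg hd2] at hw2; omega
    · by_cases hd3 : d ∈ J3
      · have := hc3 hd3; rw [if_pos hd3] at hw3; omega
      · rw [if_neg hd3] at hw3; omega
  -- "safe move" helper
  have member : ∀ d : Fin n, 0 < v d →
      (d ∈ J1 → (c ∈ J1 ∨ a1 < wdeg J1 v)) →
      (d ∈ J2 → (c ∈ J2 ∨ a2 < wdeg J2 v)) →
      (d ∈ J3 → (c ∈ J3 ∨ a3 < wdeg J3 v)) →
      (monomial (v + Finsupp.single c 1 - Finsupp.single d 1) (1 : K)) ∈ I := by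
    intro d hd s1 s2 s3
    have hsle : Finsupp.single d 1 ≤ v + Finsupp.single c 1 := by
      refine Finsupp.single_le_iff.mpr ?_
      have h2 : ((v + Finsupp.single c 1 : Fin n →₀ ℕ)) d = v d + (Finsupp.single c 1) d :=
        Finsupp.add_apply _ _ _
      omega
    have key : v + Finsupp.single c 1 - Finsupp.single d 1 + Finsupp.single d 1
        = v + Finsupp.single c 1 := tsub_add_cancel_of_le hsle
    set w := v + Finsupp.single c 1 - Finsupp.single d 1 with hwdef
    refine (memI _).mpr ⟨?_, ?_, ?_⟩
    · have hk : wdeg J1 w + (if d ∈ J1 then 1 else 0)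
          = wdeg J1 v + (if c ∈ J1 then 1 else 0) := by
        rw [← wdeg_single J1 d 1, ← wdeg_add, key, wdeg_add, wdeg_single]
      by_cases hd1 : d ∈ J1
      · rcases s1 hd1 with h | h
        · rw [if_pos hd1, if_pos h] at hk; omega
        · rw [if_pos hd1] at hk
          have : (if c ∈ J1 then 1 else 0) ≤ 1 := by split <;> omega
          omega
      · rw [if_neg hd1] at hk
        have : (0:ℕ) ≤ (if c ∈ J1 then 1 else 0) := by positivity
        omega
    · have hk : wdeg J2 w + (if d ∈ J2 then 1 else 0)
          = wdeg J2 v + (if c ∈ J2 then 1 else 0) := by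
        rw [← wdeg_single J2 d 1, ← wdeg_add, key, wdeg_add, wdeg_single]
      by_cases hd2 : d ∈ J2
      · rcases s2 hd2 with h | h
        · rw [if_pos hd2, if_pos h] at hk; omega
        · rw [if_pos hd2] at hk
          have : (if c ∈ J2 then 1 else 0) ≤ 1 := by split <;> omega
          omega
      · rw [if_neg hd2] at hk
        have : (0:ℕ) ≤ (if c ∈ J2 then 1 else 0) := by positivity
        omega
    · have hk : wdeg J3 w + (if d ∈ J3 then 1 else 0)
          = wdeg J3 v + (if c ∈ J3 then 1 else 0) := by
        rw [← wdeg_single J3 d 1, ← wdeg_add, key, wdeg_add, wdeg_single]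
      by_cases hd3 : d ∈ J3
      · rcases s3 hd3 with h | h
        · rw [if_pos hd3, if_pos h] at hk; omega
        · rw [if_pos hd3] at hk
          have : (if c ∈ J3 then 1 else 0) ≤ 1 := by split <;> omega
          omega
      · rw [if_neg hd3] at hk
        have : (0:ℕ) ≤ (if c ∈ J3 then 1 else 0) := by positivity
        omega
  -- existence of some support position after t
  have L0 : ∃ j : Fin n, t < j ∧ 0 < v (σ j) := by
    by_contra hcon
    push_neg at hcon
    have hle : v ≤ u := by
      intro i
      rcases lt_trichotomy (σ.symm i) t with hk | hk | hk
      · have := hpre (σ.symm i) hk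
        simp only [Equiv.apply_symm_apply] at this
        omega
      · have h2 : σ (σ.symm i) = c := by rw [hk]
        rw [Equiv.apply_symm_apply] at h2
        rw [h2]
        exact le_of_lt hlt
      · have := hcon (σ.symm i) hk
        rw [Equiv.apply_symm_apply] at this
        omega
    have hne : v ≠ u := by
      intro h
      rw [h] at hlt
      exact lt_irrefl _ hlt
    exact hu.2 v hle hne hv.1
  -- sums over positions
  set R := rkAux J1 J2 J3 with hR
  set F : Finset (Fin n) := Finset.univ.filter (fun k : Fin n => k ≤ t) with hF
  have hdeg : ∀ (J : Set (Fin n)) (m : Fin n →₀ ℕ),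
      wdeg J m = ∑ k : Fin n, (if σ k ∈ J then m (σ k) else 0) :=
    fun J m => (Equiv.sum_comp σ (fun i => if i ∈ J then m i else 0)).symm
  have hsplit : ∀ (J : Set (Fin n)) (m : Fin n →₀ ℕ),
      wdeg J m = (∑ k ∈ F, (if σ k ∈ J then m (σ k) else 0))
        + ∑ k ∈ Finset.univ.filter (fun k : Fin n => ¬ k ≤ t), (if σ k ∈ J then m (σ k) else 0) := by
    intro J m
    rw [hdeg J m, hF]
    exact (Finset.sum_filter_add_sum_filter_not Finset.univ _ _).symm
  have hstrict : ∀ J : Set (Fin n), c ∈ J →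
      (∑ k ∈ F, (if σ k ∈ J then v (σ k) else 0)) < ∑ k ∈ F, (if σ k ∈ J then u (σ k) else 0) := by
    intro J hcJ
    refine Finset.sum_lt_sum ?_ ⟨t, ?_, ?_⟩
    · intro k hk
      rw [hF, Finset.mem_filter] at hk
      rcases lt_or_eq_of_le hk.2 with h | h
      · rw [hpre k h]
      · rw [h]
        by_cases hJ : σ t ∈ J
        · rw [if_pos hJ, if_pos hJ]
          exact le_of_lt hlt
        · rw [if_neg hJ, if_neg hJ]
    · rw [hF, Finset.mem_filter]; exact ⟨Finset.mem_univ t, le_refl t⟩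
    · rw [if_pos hcJ, if_pos hcJ]; exact hlt
  have hboundu : ∀ J : Set (Fin n),
      (∑ k ∈ F, (if σ k ∈ J then u (σ k) else 0)) ≤ wdeg J u := by
    intro J
    rw [hdeg J u]
    exact Finset.sum_le_sum_of_subset (Finset.subset_univ F)
  -- rank monotonicity at positions
  have hrankpos : ∀ j : Fin n, t < j → R c ≤ R (σ j) := fun j hj => hmono (le_of_lt hj)
  have hposrank : ∀ j : Fin n, j ≤ t → R (σ j) ≤ R c := fun j hj => hmono hj
  -- c is in the support of u, so it has a tight constraint for u
  have hcu : 0 < u c := lt_of_le_of_lt (Nat.zero_le _) hlt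
  have ctight := tightfact u hu c hcu
  -- main case analysis on the region of c
  have hnotF : ∀ k : Fin n, k ∈ Finset.univ.filter (fun k : Fin n => ¬ k ≤ t) ↔ t < k := by
    intro k
    rw [Finset.mem_filter]
    simp [not_le]
  obtain ⟨Pu1, Pu2, Pu3⟩ := Pu
  obtain ⟨Pv1, Pv2, Pv3⟩ := Pv
  by_cases hc1 : c ∈ J1 <;> by_cases hc2 : c ∈ J2 <;> by_cases hc3 : c ∈ J3
  · exact absurd hc3 (fun h => h13' c hc1 h)
  · -- Case R c = 0 : c ∈ J1 ∩ J2
    have hRc : R c = 0 := by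
      rcases (hJ1 c).mp hc1 with h | h
      · exact h
      · rcases (hJ2 c).mp hc2 with h' | h' | h' <;> omega
    by_cases hex : ∃ j, t < j ∧ 0 < v (σ j) ∧ (σ j ∉ J3 ∨ a3 < wdeg J3 v)
    · obtain ⟨j, hj, hvj, hsafe⟩ := hex
      refine ⟨j, hj, hvj, member (σ j) hvj (fun _ => Or.inl hc1) (fun _ => Or.inl hc2) ?_⟩
      intro hd3
      rcases hsafe with h | h
      · exact absurd hd3 h
      · exact Or.inr h
    · exfalso
      push_neg at hex
      have hzero : ∑ k ∈ Finset.univ.filter (fun k : Fin n => ¬ k ≤ t),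
          (if σ k ∈ J1 then v (σ k) else 0) = 0 := by
        refine Finset.sum_eq_zero fun k hk => ?_
        rw [hnotF] at hk
        by_cases hvk : 0 < v (σ k)
        · have := (hex k hk hvk).1
          rw [if_neg (fun h => h13' (σ k) h this)]
        · by_cases h' : σ k ∈ J1
          · rw [if_pos h']; omega
          · rw [if_neg h']
      have hvJ1 : wdeg J1 v = ∑ k ∈ F, (if σ k ∈ J1 then v (σ k) else 0) := by
        rw [hsplit J1 v, hzero, add_zero]
      have hlt1 := hstrict J1 hc1
      rcases ctight with ⟨_, h1⟩ | ⟨_, h2⟩ | ⟨hcc3, _⟩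
      · have hb := hboundu J1
        omega
      · have hle12 : (∑ k ∈ F, (if σ k ∈ J1 then u (σ k) else 0))
            ≤ ∑ k ∈ F, (if σ k ∈ J2 then u (σ k) else 0) := by
          refine Finset.sum_le_sum fun k hk => ?_
          rw [hF, Finset.mem_filter] at hk
          by_cases hk1 : σ k ∈ J1
          · have hr := hposrank k hk.2
            rw [hRc] at hr
            have hr0 : R (σ k) = 0 := Nat.le_zero.mp hr
            have hk2 : σ k ∈ J2 := (hJ2 (σ k)).mpr (Or.inl hr0)
            rw [if_pos hk1, if_pos hk2]
          · rw [if_neg hk1]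
            exact Nat.zero_le _
        have hb := hboundu J2
        omega
      · exact h13' c hc1 hcc3
  · exact absurd hc3 (fun h => h13' c hc1 h)
  · -- Case R c = 1 : c ∈ J1 only
    have hRc : R c = 1 := by
      rcases (hJ1 c).mp hc1 with h | h
      · exact absurd ((hJ2 c).mpr (Or.inl h)) hc2
      · exact h
    have h1 : wdeg J1 u = a1 := by
      rcases ctight with ⟨_, h⟩ | ⟨h, _⟩ | ⟨h, _⟩
      · exact h
      · exact absurd h hc2
      · exact absurd h hc3
    have hlt1 := hstrict J1 hc1
    have hb := hboundu J1
    have hspl := hsplit J1 v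
    have hpos2 : ∑ k ∈ Finset.univ.filter (fun k : Fin n => ¬ k ≤ t),
        (if σ k ∈ J1 then v (σ k) else 0) ≠ 0 := by omega
    obtain ⟨j, hjmem, hjne⟩ := Finset.exists_ne_zero_of_sum_ne_zero hpos2
    rw [hnotF] at hjmem
    have hj1 : σ j ∈ J1 := by
      by_contra h
      rw [if_neg h] at hjne
      exact hjne rfl
    have hvj : 0 < v (σ j) := by
      rw [if_pos hj1] at hjne
      omega
    have hrj : R (σ j) = 1 := by
      have h1' := hrankpos j hjmem
      rw [hRc] at h1'
      rcases (hJ1 (σ j)).mp hj1 with h | h <;> omega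
    have hd2 : σ j ∉ J2 := by
      intro h
      rcases (hJ2 (σ j)).mp h with h' | h' | h' <;> omega
    have hd3 : σ j ∉ J3 := by
      intro h
      rcases (hJ3 (σ j)).mp h with h' | h' <;> omega
    exact ⟨j, hjmem, hvj, member (σ j) hvj (fun _ => Or.inl hc1)
      (fun h => absurd h hd2) (fun h => absurd h hd3)⟩
  · -- Case R c = 2 : c ∈ J2 ∩ J3
    obtain ⟨j, hj, hvj⟩ := L0
    have hRc : R c = 2 := by
      rcases (hJ3 c).mp hc3 with h | h
      · exact h
      · rcases (hJ2 c).mp hc2 with h' | h' | h' <;> omega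
    have hd1 : σ j ∉ J1 := by
      intro h
      have h1' := hrankpos j hj
      rw [hRc] at h1'
      rcases (hJ1 (σ j)).mp h with h' | h' <;> omega
    exact ⟨j, hj, hvj, member (σ j) hvj (fun h => absurd h hd1)
      (fun _ => Or.inl hc2) (fun _ => Or.inl hc3)⟩
  · -- Case R c = 3 : c ∈ J2 only
    have hRc : R c = 3 := by
      rcases (hJ2 c).mp hc2 with h | h | h
      · exact absurd ((hJ1 c).mpr (Or.inl h)) hc1
      · exact absurd ((hJ3 c).mpr (Or.inl h)) hc3
      · exact h
    have h2 : wdeg J2 u = a2 := by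
      rcases ctight with ⟨h, _⟩ | ⟨_, h⟩ | ⟨h, _⟩
      · exact absurd h hc1
      · exact h
      · exact absurd h hc3
    by_cases hex : ∃ j, t < j ∧ 0 < v (σ j) ∧ (σ j ∉ J3 ∨ a3 < wdeg J3 v)
    · obtain ⟨j, hj, hvj, hsafe⟩ := hex
      have hd1 : σ j ∉ J1 := by
        intro h
        have h1' := hrankpos j hj
        rw [hRc] at h1'
        rcases (hJ1 (σ j)).mp h with h' | h' <;> omega
      refine ⟨j, hj, hvj, member (σ j) hvj (fun h => absurd h hd1) (fun _ => Or.inl hc2) ?_⟩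
      intro hd3
      rcases hsafe with h | h
      · exact absurd hd3 h
      · exact Or.inr h
    · exfalso
      push_neg at hex
      have hzero : ∑ k ∈ Finset.univ.filter (fun k : Fin n => ¬ k ≤ t),
          (if σ k ∈ J2 then v (σ k) else 0) = 0 := by
        refine Finset.sum_eq_zero fun k hk => ?_
        rw [hnotF] at hk
        by_cases hvk : 0 < v (σ k)
        · have hk3 := (hex k hk hvk).1
          have hrk : R (σ k) = 4 := by
            have h1' := hrankpos k hk
            rw [hRc] at h1'
            rcases (hJ3 (σ k)).mp hk3 with h' | h' <;> omega
          have : σ k ∉ J2 := by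
            intro h
            rcases (hJ2 (σ k)).mp h with h' | h' | h' <;> omega
          rw [if_neg this]
        · by_cases h' : σ k ∈ J2
          · rw [if_pos h']; omega
          · rw [if_neg h']
      have hspl := hsplit J2 v
      have hlt2 := hstrict J2 hc2
      have hb := hboundu J2
      omega
  · -- Case R c = 4 : c ∈ J3 only
    obtain ⟨j, hj, hvj⟩ := L0
    have hRc : R c = 4 := by
      rcases (hJ3 c).mp hc3 with h | h
      · exact absurd ((hJ2 c).mpr (Or.inr (Or.inl h))) hc2
      · exact h
    have hrj := hrankpos j hj
    rw [hRc] at hrj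
    have hd1 : σ j ∉ J1 := by
      intro h
      rcases (hJ1 (σ j)).mp h with h' | h' <;> omega
    have hd2 : σ j ∉ J2 := by
      intro h
      rcases (hJ2 (σ j)).mp h with h' | h' | h' <;> omega
    exact ⟨j, hj, hvj, member (σ j) hvj (fun h => absurd h hd1)
      (fun h => absurd h hd2) (fun _ => Or.inl hc3)⟩
  · -- Case : c in no Jk, contradiction with minimality of u
    rcases ctight with ⟨h, _⟩ | ⟨h, _⟩ | ⟨h, _⟩
    · exact absurd h hc1
    · exact absurd h hc2
    · exact absurd h hc3
end

section
/- Let J_1, J_2, J_3, J_4 ⊂ [n] be such that J_1 ∩ J_3 = J_1 ∩ J_4 = J_2 ∩ J_4 = ∅, J_2 ⊆ J_1 ∪ J_3, and J_3 ⊆ J_2 ∪ J_4. Then for any positive integer a, the ideal I = m_{J_1}^a ∩ m_{J_2}^a ∩ m_{J_3}^a ∩ m_{J_4}^a in K[x_1,...,x_n] satisfies the non-pure dual exchange property. -/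
open MvPolynomial

open scoped Classical

namespace NPDEaux

variable {n : ℕ} {K : Type*} [Field K]

/-- Sum of exponents of `m` over indices in `J`. -/
noncomputable def S (J : Set (Fin n)) (m : Fin n →₀ ℕ) : ℕ :=
  ∑ i, if i ∈ J then m i else 0

lemma S_add (J : Set (Fin n)) (m m' : Fin n →₀ ℕ) :
    S J (m + m') = S J m + S J m' := by
  rw [S, S, S, ← Finset.sum_add_distrib]
  refine Finset.sum_congr rfl fun p _ => ?_
  by_cases h : p ∈ J <;> simp [h]

lemma S_single (J : Set (Fin n)) (i : Fin n) (k : ℕ) :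
    S J (Finsupp.single i k) = if i ∈ J then k else 0 := by
  rw [S, Finset.sum_eq_single i]
  · simp
  · intro b _ hb
    simp [Finsupp.single_apply, Ne.symm hb]
  · simp

lemma S_mono_set {A B : Set (Fin n)} (h : A ⊆ B) (m : Fin n →₀ ℕ) :
    S A m ≤ S B m := by
  refine Finset.sum_le_sum fun p _ => ?_
  by_cases hp : p ∈ A
  · simp [hp, h hp]
  · simp [hp]

lemma S_eq_zero {A : Set (Fin n)} {m : Fin n →₀ ℕ} (h : ∀ p ∈ A, m p = 0) :
    S A m = 0 := by
  refine Finset.sum_eq_zero fun p _ => ?_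
  by_cases hp : p ∈ A <;> simp [hp, h p]

lemma S_union {A B : Set (Fin n)} (h : A ∩ B = ∅) (m : Fin n →₀ ℕ) :
    S (A ∪ B) m = S A m + S B m := by
  rw [S, S, S, ← Finset.sum_add_distrib]
  refine Finset.sum_congr rfl fun p _ => ?_
  have hAB : ¬ (p ∈ A ∧ p ∈ B) := fun hc => by
    have : p ∈ A ∩ B := hc
    simp [h] at this
  by_cases hA : p ∈ A <;> by_cases hB : p ∈ B <;> simp [hA, hB] <;> exact absurd ⟨hA, hB⟩ hAB

lemma S_pos_exists {J : Set (Fin n)} {m : Fin n →₀ ℕ} (h : 0 < S J m) :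
    ∃ i ∈ J, 0 < m i := by
  obtain ⟨i, -, hi⟩ := Finset.exists_ne_zero_of_sum_ne_zero (by omega : S J m ≠ 0)
  by_cases hiJ : i ∈ J
  · exact ⟨i, hiJ, by simpa [hiJ] using Nat.pos_of_ne_zero (by simpa [hiJ] using hi)⟩
  · simp [hiJ] at hi

lemma pow_eq (J : Set (Fin n)) (a : ℕ) :
    (mIdeal K J) ^ a
      = Ideal.span ((fun s => monomial s (1 : K)) '' {s | a ≤ S J s}) := by
  induction a with
  | zero =>
    rw [pow_zero, Ideal.one_eq_top, eq_comm, Ideal.eq_top_iff_one]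
    have : (1 : MvPolynomial (Fin n) K) = monomial 0 1 := by simp
    rw [this]
    exact Ideal.subset_span ⟨0, by simp [S], rfl⟩
  | succ a ih =>
    apply le_antisymm
    · rw [pow_succ, ih]
      have hJ : mIdeal K J ≤ Ideal.span ((fun s => monomial s (1 : K)) '' {s | 1 ≤ S J s}) := by
        rw [mIdeal, Ideal.span_le]
        rintro _ ⟨i, hi, rfl⟩
        exact Ideal.subset_span ⟨Finsupp.single i 1, by simp [S_single, hi], rfl⟩
      calc Ideal.span ((fun s => monomial s (1 : K)) '' {s | a ≤ S J s}) * mIdeal K J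
          ≤ Ideal.span ((fun s => monomial s (1 : K)) '' {s | a ≤ S J s}) *
            Ideal.span ((fun s => monomial s (1 : K)) '' {s | 1 ≤ S J s}) :=
            Ideal.mul_mono_right hJ
        _ ≤ Ideal.span ((fun s => monomial s (1 : K)) '' {s | a + 1 ≤ S J s}) := by
            rw [Ideal.span_mul_span']
            apply Ideal.span_le.2
            rintro _ ⟨_, ⟨s, hs, rfl⟩, _, ⟨t, ht, rfl⟩, rfl⟩
            simp only
            rw [monomial_mul, one_mul]
            exact Ideal.subset_span ⟨s + t, by simp only [Set.mem_setOf_eq] at hs ht ⊢; rw [S_add]; omega, rfl⟩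
    · apply Ideal.span_le.2
      rintro _ ⟨s, hs, rfl⟩
      simp only [Set.mem_setOf_eq] at hs
      obtain ⟨i, hiJ, hipos⟩ := S_pos_exists (J := J) (m := s) (by omega)
      have hle : Finsupp.single i 1 ≤ s := by
        rw [Finsupp.le_def]
        intro p
        rcases eq_or_ne i p with rfl | hne
        · simpa [Finsupp.single_apply] using (show 1 ≤ s i from hipos)
        · simp [Finsupp.single_apply, hne]
      have hsum : (s - Finsupp.single i 1) + Finsupp.single i 1 = s :=
        tsub_add_cancel_of_le hle
      have hSs : S J (s - Finsupp.single i 1) + 1 = S J s := by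
        conv_rhs => rw [← hsum]
        rw [S_add, S_single, if_pos hiJ]
      have h1 : monomial s (1 : K)
          = monomial (s - Finsupp.single i 1) 1 * X i := by
        rw [show (X i : MvPolynomial (Fin n) K) = monomial (Finsupp.single i 1) 1 from rfl,
          monomial_mul, one_mul, hsum]
      show monomial s (1 : K) ∈ (mIdeal K J) ^ (a+1)
      rw [h1, pow_succ]
      exact Ideal.mul_mem_mul
        (ih ▸ Ideal.subset_span ⟨s - Finsupp.single i 1, by simp only [Set.mem_setOf_eq]; omega, rfl⟩)
        (Ideal.subset_span ⟨i, hiJ, rfl⟩)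

lemma mem_pow_iff (J : Set (Fin n)) (a : ℕ) (m : Fin n →₀ ℕ) :
    (monomial m (1 : K)) ∈ (mIdeal K J) ^ a ↔ a ≤ S J m := by
  rw [pow_eq, mem_ideal_span_monomial_image]
  constructor
  · intro h
    obtain ⟨si, hsi, hle⟩ := h m (by simp [support_monomial])
    exact le_trans hsi (by
      have := Finsupp.le_def.1 hle
      exact Finset.sum_le_sum fun p _ => by by_cases hp : p ∈ J <;> simp [hp, this p])
  · intro h xi hxi
    rw [support_monomial, if_neg (one_ne_zero)] at hxi
    simp only [Finset.mem_singleton] at hxi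
    exact ⟨m, h, hxi.ge⟩

end NPDEaux

open NPDEaux

theorem stmt9 (K : Type*) [Field K] {n : ℕ} (J1 J2 J3 J4 : Set (Fin n))
    (h13 : J1 ∩ J3 = ∅) (h14 : J1 ∩ J4 = ∅) (h24 : J2 ∩ J4 = ∅)
    (h2sub : J2 ⊆ J1 ∪ J3) (h3sub : J3 ⊆ J2 ∪ J4)
    (a : ℕ) (ha : 0 < a) :
    NPDE ((mIdeal K J1) ^ a ⊓ (mIdeal K J2) ^ a ⊓ (mIdeal K J3) ^ a ⊓ (mIdeal K J4) ^ a) := by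
  classical
  set I : Ideal (MvPolynomial (Fin n) K) :=
    (mIdeal K J1) ^ a ⊓ (mIdeal K J2) ^ a ⊓ (mIdeal K J3) ^ a ⊓ (mIdeal K J4) ^ a with hIdef
  -- disjointness in pointwise form
  have d13 : ∀ p : Fin n, p ∈ J1 → p ∈ J3 → False := fun p h h' =>
    Set.notMem_empty p (h13 ▸ (⟨h, h'⟩ : p ∈ J1 ∩ J3))
  have d14 : ∀ p : Fin n, p ∈ J1 → p ∈ J4 → False := fun p h h' =>
    Set.notMem_empty p (h14 ▸ (⟨h, h'⟩ : p ∈ J1 ∩ J4))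
  have d24 : ∀ p : Fin n, p ∈ J2 → p ∈ J4 → False := fun p h h' =>
    Set.notMem_empty p (h24 ▸ (⟨h, h'⟩ : p ∈ J2 ∩ J4))
  -- membership criterion
  have hmem : ∀ m : Fin n →₀ ℕ, (monomial m (1 : K)) ∈ I ↔
      (a ≤ S J1 m ∧ a ≤ S J2 m ∧ a ≤ S J3 m ∧ a ≤ S J4 m) := by
    intro m
    simp only [hIdef, Submodule.mem_inf, mem_pow_iff]
    tauto
  -- tightness at support points of a minimal generator
  have htight : ∀ m : Fin n →₀ ℕ, MinGen I m → ∀ p, 0 < m p →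
      (p ∈ J1 ∧ S J1 m = a) ∨ (p ∈ J2 ∧ S J2 m = a) ∨
      (p ∈ J3 ∧ S J3 m = a) ∨ (p ∈ J4 ∧ S J4 m = a) := by
    intro m hm p hp
    obtain ⟨h1, h2, h3, h4⟩ := (hmem m).1 hm.1
    have hle : m - Finsupp.single p 1 ≤ m := tsub_le_self
    have hne : m - Finsupp.single p 1 ≠ m := by
      intro h
      have := DFunLike.congr_fun h p
      rw [Finsupp.tsub_apply, Finsupp.single_apply, if_pos rfl] at this
      omega
    have hnot := hm.2 _ hle hne
    rw [hmem] at hnot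
    have hsum : (m - Finsupp.single p 1) + Finsupp.single p 1 = m := by
      apply tsub_add_cancel_of_le
      rw [Finsupp.le_def]
      intro q
      rcases eq_or_ne p q with rfl | hq
      · simpa [Finsupp.single_apply] using (show 1 ≤ m p from hp)
      · simp [Finsupp.single_apply, hq]
    have e : ∀ J : Set (Fin n),
        S J (m - Finsupp.single p 1) + (if p ∈ J then 1 else 0) = S J m := by
      intro J
      conv_rhs => rw [← hsum]
      rw [S_add, S_single]
    by_contra hcon
    push_neg at hcon
    obtain ⟨c1, c2, c3, c4⟩ := hcon
    apply hnot
    refine ⟨?_, ?_, ?_, ?_⟩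
    · have := e J1
      by_cases hp1 : p ∈ J1
      · have := c1 hp1; simp only [if_pos hp1] at *; omega
      · simp only [if_neg hp1] at *; omega
    · have := e J2
      by_cases hp2 : p ∈ J2
      · have := c2 hp2; simp only [if_pos hp2] at *; omega
      · simp only [if_neg hp2] at *; omega
    · have := e J3
      by_cases hp3 : p ∈ J3
      · have := c3 hp3; simp only [if_pos hp3] at *; omega
      · simp only [if_neg hp3] at *; omega
    · have := e J4
      by_cases hp4 : p ∈ J4
      · have := c4 hp4; simp only [if_pos hp4] at *; omega
      · simp only [if_neg hp4] at *; omega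
  -- every minimal generator is tight on J1
  have hS1 : ∀ m : Fin n →₀ ℕ, MinGen I m → S J1 m = a := by
    intro m hm
    obtain ⟨h1, h2, h3, h4⟩ := (hmem m).1 hm.1
    by_contra hne
    have hgt : a + 1 ≤ S J1 m := by omega
    have hz : ∀ p, p ∈ J1 → p ∉ J2 → m p = 0 := by
      intro p hp1 hp2
      by_contra hmp
      rcases htight m hm p (Nat.pos_of_ne_zero hmp) with
        ⟨_, hS⟩ | ⟨h, _⟩ | ⟨h, _⟩ | ⟨h, _⟩
      · exact hne hS
      · exact hp2 h
      · exact d13 p hp1 h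
      · exact d14 p hp1 h
    have hle12 : S J1 m ≤ S J2 m := by
      refine Finset.sum_le_sum fun p _ => ?_
      by_cases hp1 : p ∈ J1 <;> by_cases hp2 : p ∈ J2
      · simp [hp1, hp2]
      · simp [hp1, hp2, hz p hp1 hp2]
      · simp [hp1, hp2]
      · simp [hp1, hp2]
    obtain ⟨p, hp1, hppos⟩ := S_pos_exists (show 0 < S J1 m by omega)
    rcases htight m hm p hppos with ⟨_, hS⟩ | ⟨_, hS⟩ | ⟨h, _⟩ | ⟨h, _⟩
    · exact hne hS
    · omega
    · exact d13 p hp1 h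
    · exact d14 p hp1 h
  -- every minimal generator is tight on J4
  have hS4 : ∀ m : Fin n →₀ ℕ, MinGen I m → S J4 m = a := by
    intro m hm
    obtain ⟨h1, h2, h3, h4⟩ := (hmem m).1 hm.1
    by_contra hne
    have hgt : a + 1 ≤ S J4 m := by omega
    have hz : ∀ p, p ∈ J4 → p ∉ J3 → m p = 0 := by
      intro p hp4 hp3
      by_contra hmp
      rcases htight m hm p (Nat.pos_of_ne_zero hmp) with
        ⟨h, _⟩ | ⟨h, _⟩ | ⟨h, _⟩ | ⟨_, hS⟩
      · exact d14 p h hp4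
      · exact d24 p h hp4
      · exact hp3 h
      · exact hne hS
    have hle43 : S J4 m ≤ S J3 m := by
      refine Finset.sum_le_sum fun p _ => ?_
      by_cases hp4 : p ∈ J4 <;> by_cases hp3 : p ∈ J3
      · simp [hp4, hp3]
      · simp [hp4, hp3, hz p hp4 hp3]
      · simp [hp4, hp3]
      · simp [hp4, hp3]
    obtain ⟨p, hp4, hppos⟩ := S_pos_exists (show 0 < S J4 m by omega)
    rcases htight m hm p hppos with ⟨h, _⟩ | ⟨h, _⟩ | ⟨_, hS⟩ | ⟨_, hS⟩
    · exact d14 p h hp4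
    · exact d24 p h hp4
    · omega
    · exact hne hS
  -- degree decomposition
  have hdegsplit : ∀ m : Fin n →₀ ℕ, MinGen I m →
      expDeg m = S J1 m + S (J2 ∩ J3) m + S J4 m := by
    intro m hm
    have hexp : expDeg m = ∑ p, m p := Finsupp.sum_fintype _ _ fun _ => rfl
    rw [hexp, S, S, S, ← Finset.sum_add_distrib, ← Finset.sum_add_distrib]
    refine Finset.sum_congr rfl fun p _ => ?_
    by_cases hp1 : p ∈ J1 <;> by_cases hpm : p ∈ J2 ∩ J3 <;> by_cases hp4 : p ∈ J4
    · exact absurd hpm.2 fun h => d13 p hp1 h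
    · exact absurd hpm.2 fun h => d13 p hp1 h
    · exact absurd hp4 fun h => d14 p hp1 h
    · simp [hp1, hpm, hp4]
    · exact absurd hp4 fun h => d24 p hpm.1 h
    · simp [hp1, hpm, hp4]
    · simp [hp1, hpm, hp4]
    · -- p in none of them: m p = 0
      have hmp : m p = 0 := by
        by_contra hmp
        rcases htight m hm p (Nat.pos_of_ne_zero hmp) with
          ⟨h, _⟩ | ⟨h, _⟩ | ⟨h, _⟩ | ⟨h, _⟩
        · exact hp1 h
        · rcases h2sub h with h' | h'
          · exact hp1 h'
          · exact hpm ⟨h, h'⟩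
        · rcases h3sub h with h' | h'
          · exact hpm ⟨h', h⟩
          · exact hp4 h'
        · exact hp4 h
      simp [hp1, hpm, hp4, hmp]
  -- now the main argument
  intro u v hu hv hdeg i hiv
  obtain ⟨hu1, hu2, hu3, hu4⟩ := (hmem u).1 hu.1
  obtain ⟨hv1, hv2, hv3, hv4⟩ := (hmem v).1 hv.1
  have hS1u := hS1 u hu
  have hS1v := hS1 v hv
  have hS4u := hS4 u hu
  have hS4v := hS4 v hv
  have hR : S (J2 ∩ J3) u ≤ S (J2 ∩ J3) v := by
    have du := hdegsplit u hu
    have dv := hdegsplit v hv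
    omega
  -- extraction lemmas
  have hex : ∀ A : Set (Fin n), i ∈ A → S A u ≤ S A v → ∃ j ∈ A, u j < v j := by
    intro A hiA hS
    by_contra hc
    push_neg at hc
    have : S A v < S A u := by
      apply Finset.sum_lt_sum
      · intro p _
        by_cases hp : p ∈ A
        · simp only [if_pos hp]; exact hc p hp
        · simp [hp]
      · exact ⟨i, Finset.mem_univ i, by simp only [if_pos hiA]; omega⟩
    omega
  have hex2 : ∀ A : Set (Fin n), S A u < S A v → ∃ j ∈ A, u j < v j := by
    intro A hS
    by_contra hc
    push_neg at hc
    have : S A v ≤ S A u := by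
      refine Finset.sum_le_sum fun p _ => ?_
      by_cases hp : p ∈ A
      · simp only [if_pos hp]; exact hc p hp
      · simp [hp]
    omega
  have hlt_of : ∀ A : Set (Fin n), i ∈ A → (∀ j ∈ A, ¬ u j < v j) → S A v < S A u := by
    intro A hiA hc
    apply Finset.sum_lt_sum
    · intro p _
      by_cases hp : p ∈ A
      · simp only [if_pos hp]; have := hc p hp; omega
      · simp [hp]
    · exact ⟨i, Finset.mem_univ i, by simp only [if_pos hiA]; omega⟩
  -- reduction of the goal to four numeric inequalities
  have hgoal : ∀ j : Fin n, u j < v j →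
      (a + (if j ∈ J1 then 1 else 0) ≤ S J1 v + (if i ∈ J1 then 1 else 0)) →
      (a + (if j ∈ J2 then 1 else 0) ≤ S J2 v + (if i ∈ J2 then 1 else 0)) →
      (a + (if j ∈ J3 then 1 else 0) ≤ S J3 v + (if i ∈ J3 then 1 else 0)) →
      (a + (if j ∈ J4 then 1 else 0) ≤ S J4 v + (if i ∈ J4 then 1 else 0)) →
      (monomial (v + Finsupp.single i 1 - Finsupp.single j 1) (1 : K)) ∈ I := by
    intro j hj g1 g2 g3 g4
    have hij : i ≠ j := by intro h; rw [h] at hiv; omega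
    have hle : Finsupp.single j 1 ≤ v + Finsupp.single i 1 := by
      rw [Finsupp.le_def]
      intro q
      rcases eq_or_ne j q with rfl | hq
      · rw [Finsupp.add_apply, Finsupp.single_eq_same]
        have h0 : Finsupp.single i 1 j = 0 := by rw [Finsupp.single_apply, if_neg hij]
        rw [h0]
        omega
      · simp [Finsupp.single_apply, hq]
    have hsum : (v + Finsupp.single i 1 - Finsupp.single j 1) + Finsupp.single j 1
        = v + Finsupp.single i 1 := tsub_add_cancel_of_le hle
    have e : ∀ J : Set (Fin n),
        S J (v + Finsupp.single i 1 - Finsupp.single j 1) + (if j ∈ J then 1 else 0)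
          = S J v + (if i ∈ J then 1 else 0) := by
      intro J
      have h' : S J ((v + Finsupp.single i 1 - Finsupp.single j 1) + Finsupp.single j 1)
          = S J (v + Finsupp.single i 1) := by rw [hsum]
      rw [S_add, S_add, S_single, S_single] at h'
      exact h'
    rw [hmem]
    have e1 := e J1; have e2 := e J2; have e3 := e J3; have e4 := e J4
    exact ⟨by omega, by omega, by omega, by omega⟩
  -- classification of i
  have hiu : 0 < u i := by omega
  have hiJ : i ∈ J1 ∨ i ∈ J2 ∨ i ∈ J3 ∨ i ∈ J4 := by
    rcases htight u hu i hiu with ⟨h, _⟩ | ⟨h, _⟩ | ⟨h, _⟩ | ⟨h, _⟩ <;> tauto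
  by_cases hi2 : i ∈ J2
  · by_cases hi1 : i ∈ J1
    · -- case B : i ∈ J1 ∩ J2
      obtain ⟨j, hjJ1, hj⟩ := hex J1 hi1 (by omega)
      refine ⟨j, hj, hgoal j hj ?_ ?_ ?_ ?_⟩
      · rw [if_pos hjJ1, if_pos hi1]; omega
      · rw [if_pos hi2]
        have : (if j ∈ J2 then 1 else 0) ≤ 1 := by split <;> omega
        omega
      · rw [if_neg (fun h => d13 j hjJ1 h), if_neg (fun h => d13 i hi1 h)]; omega
      · rw [if_neg (fun h => d14 j hjJ1 h), if_neg (fun h => d14 i hi1 h)]; omega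
    · -- case A : i ∈ J2 ∩ J3
      have hi3 : i ∈ J3 := (h2sub hi2).resolve_left hi1
      obtain ⟨j, hjR, hj⟩ := hex (J2 ∩ J3) ⟨hi2, hi3⟩ hR
      refine ⟨j, hj, hgoal j hj ?_ ?_ ?_ ?_⟩
      · rw [if_neg (fun h => d13 j h hjR.2), if_neg hi1]; omega
      · rw [if_pos hjR.1, if_pos hi2]; omega
      · rw [if_pos hjR.2, if_pos hi3]; omega
      · rw [if_neg (fun h => d24 j hjR.1 h), if_neg (fun h => d24 i hi2 h)]; omega
  · by_cases hi1 : i ∈ J1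
    · -- case D : i ∈ J1 \ J2
      have hi3 : i ∉ J3 := fun h => d13 i hi1 h
      have hi4 : i ∉ J4 := fun h => d14 i hi1 h
      by_cases hcase : ∃ j, (j ∈ J1 ∧ j ∉ J2) ∧ u j < v j
      · obtain ⟨j, ⟨hj1, hj2⟩, hj⟩ := hcase
        refine ⟨j, hj, hgoal j hj ?_ ?_ ?_ ?_⟩
        · rw [if_pos hj1, if_pos hi1]; omega
        · rw [if_neg hj2, if_neg hi2]; omega
        · rw [if_neg (fun h => d13 j hj1 h), if_neg hi3]; omega
        · rw [if_neg (fun h => d14 j hj1 h), if_neg hi4]; omega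
      · push_neg at hcase
        have hdisj : (J1 ∩ J2) ∩ (J1 \ J2) = ∅ :=
          Set.eq_empty_iff_forall_notMem.2 fun p hp => hp.2.2 hp.1.2
        have hsplit : ∀ m : Fin n →₀ ℕ, S (J1 ∩ J2) m + S (J1 \ J2) m = S J1 m := by
          intro m
          rw [← S_union hdisj, Set.inter_union_diff]
        have hlt : S (J1 \ J2) v < S (J1 \ J2) u := by
          apply hlt_of (J1 \ J2) ⟨hi1, hi2⟩
          intro j hjd hjlt
          exact absurd hjlt (by have := hcase j ⟨hjd.1, hjd.2⟩; omega)
        have hlt' : S (J1 ∩ J2) u < S (J1 ∩ J2) v := by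
          have := hsplit u; have := hsplit v; omega
        obtain ⟨j, hjm, hj⟩ := hex2 (J1 ∩ J2) hlt'
        have hS2v : a + 1 ≤ S J2 v := by
          by_contra hS2
          have hJ2eq : (J1 ∩ J2) ∪ (J2 ∩ J3) = J2 := by
            ext p
            simp only [Set.mem_union, Set.mem_inter_iff]
            constructor
            · rintro (⟨_, h⟩ | ⟨h, _⟩) <;> exact h
            · intro h
              rcases h2sub h with h' | h'
              · exact Or.inl ⟨h', h⟩
              · exact Or.inr ⟨h, h'⟩
          have hdis2 : (J1 ∩ J2) ∩ (J2 ∩ J3) = ∅ :=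
            Set.eq_empty_iff_forall_notMem.2 fun p hp => d13 p hp.1.1 hp.2.2
          have h2u : S (J1 ∩ J2) u + S (J2 ∩ J3) u = S J2 u := by
            rw [← S_union hdis2, hJ2eq]
          have h2v : S (J1 ∩ J2) v + S (J2 ∩ J3) v = S J2 v := by
            rw [← S_union hdis2, hJ2eq]
          omega
        refine ⟨j, hj, hgoal j hj ?_ ?_ ?_ ?_⟩
        · rw [if_pos hjm.1, if_pos hi1]; omega
        · rw [if_pos hjm.2, if_neg hi2]; omega
        · rw [if_neg (fun h => d13 j hjm.1 h), if_neg hi3]; omega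
        · rw [if_neg (fun h => d14 j hjm.1 h), if_neg hi4]; omega
    · by_cases hi3 : i ∈ J3
      · -- case C : i ∈ J3 ∩ J4
        have hi4 : i ∈ J4 := (h3sub hi3).resolve_left hi2
        obtain ⟨j, hjJ4, hj⟩ := hex J4 hi4 (by omega)
        refine ⟨j, hj, hgoal j hj ?_ ?_ ?_ ?_⟩
        · rw [if_neg (fun h => d14 j h hjJ4), if_neg hi1]; omega
        · rw [if_neg (fun h => d24 j h hjJ4), if_neg hi2]; omega
        · rw [if_pos hi3]
          have : (if j ∈ J3 then 1 else 0) ≤ 1 := by split <;> omega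
          omega
        · rw [if_pos hjJ4, if_pos hi4]; omega
      · -- case E : i ∈ J4 only
        have hi4 : i ∈ J4 := by tauto
        by_cases hcase : ∃ j, (j ∈ J4 ∧ j ∉ J3) ∧ u j < v j
        · obtain ⟨j, ⟨hj4, hj3⟩, hj⟩ := hcase
          refine ⟨j, hj, hgoal j hj ?_ ?_ ?_ ?_⟩
          · rw [if_neg (fun h => d14 j h hj4), if_neg hi1]; omega
          · rw [if_neg (fun h => d24 j h hj4), if_neg hi2]; omega
          · rw [if_neg hj3, if_neg hi3]; omega
          · rw [if_pos hj4, if_pos hi4]; omega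
        · push_neg at hcase
          have hdisj : (J4 ∩ J3) ∩ (J4 \ J3) = ∅ :=
            Set.eq_empty_iff_forall_notMem.2 fun p hp => hp.2.2 hp.1.2
          have hsplit : ∀ m : Fin n →₀ ℕ, S (J4 ∩ J3) m + S (J4 \ J3) m = S J4 m := by
            intro m
            rw [← S_union hdisj, Set.inter_union_diff]
          have hlt : S (J4 \ J3) v < S (J4 \ J3) u := by
            apply hlt_of (J4 \ J3) ⟨hi4, hi3⟩
            intro j hjd hjlt
            exact absurd hjlt (by have := hcase j ⟨hjd.1, hjd.2⟩; omega)
          have hlt' : S (J4 ∩ J3) u < S (J4 ∩ J3) v := by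
            have := hsplit u; have := hsplit v; omega
          obtain ⟨j, hjm, hj⟩ := hex2 (J4 ∩ J3) hlt'
          have hS3v : a + 1 ≤ S J3 v := by
            by_contra hS3
            have hJ3eq : (J2 ∩ J3) ∪ (J4 ∩ J3) = J3 := by
              ext p
              simp only [Set.mem_union, Set.mem_inter_iff]
              constructor
              · rintro (⟨_, h⟩ | ⟨_, h⟩) <;> exact h
              · intro h
                rcases h3sub h with h' | h'
                · exact Or.inl ⟨h', h⟩
                · exact Or.inr ⟨h', h⟩
            have hdis2 : (J2 ∩ J3) ∩ (J4 ∩ J3) = ∅ :=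
              Set.eq_empty_iff_forall_notMem.2 fun p hp => d24 p hp.1.1 hp.2.1
            have h3u : S (J2 ∩ J3) u + S (J4 ∩ J3) u = S J3 u := by
              rw [← S_union hdis2, hJ3eq]
            have h3v : S (J2 ∩ J3) v + S (J4 ∩ J3) v = S J3 v := by
              rw [← S_union hdis2, hJ3eq]
            omega
          refine ⟨j, hj, hgoal j hj ?_ ?_ ?_ ?_⟩
          · rw [if_neg (fun h => d14 j h hjm.1), if_neg hi1]; omega
          · rw [if_neg (fun h => d24 j h hjm.1), if_neg hi2]; omega
          · rw [if_pos hjm.2, if_neg hi3]; omega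
          · rw [if_pos hjm.1, if_pos hi4]; omega
end

section
/- Let I = (x_1,x_2)^2 ∩ (x_2,x_3)^2 ∩ (x_3,x_4)^2 ∩ (x_4,x_5) in K[x_1,...,x_5]. Then I does not satisfy the non-pure dual exchange property: for u = x_1x_2x_3x_4 and v = x_2^2x_4^2 in G(I), deg_{x_1}(v) < deg_{x_1}(u), but x_1x_2^2x_4 ∉ I and x_1x_2x_4^2 ∉ I. -/
open MvPolynomial

section Stmt12Aux

variable {K : Type*} [Field K]

noncomputable def stmt12Phi (K : Type*) [Field K] (a b : Fin 5) :
    MvPolynomial (Fin 5) K →ₐ[K] Polynomial K :=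
  aeval (fun i => if i = a ∨ i = b then Polynomial.X else 1)

lemma stmt12_phi_monomial (a b : Fin 5) (hab : a ≠ b) (m : Fin 5 →₀ ℕ) :
    stmt12Phi K a b (monomial m (1 : K)) = Polynomial.X ^ (m a + m b) := by
  rw [stmt12Phi, aeval_monomial, map_one, one_mul]
  rw [Finsupp.prod_fintype _ _ (fun i => by simp)]
  have h1 : ∀ i : Fin 5, (if i = a ∨ i = b then (Polynomial.X : Polynomial K) else 1) ^ m i
      = Polynomial.X ^ (if i = a ∨ i = b then m i else 0) := by
    intro i; split_ifs <;> simp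
  simp only [h1, Finset.prod_pow_eq_pow_sum]
  congr 1
  rw [Finset.sum_ite, Finset.sum_const_zero, add_zero]
  have hf : Finset.univ.filter (fun i => i = a ∨ i = b) = {a, b} := by
    ext i; simp [or_comm]
  rw [hf, Finset.sum_pair hab]

lemma stmt12_not_mem_pow (a b : Fin 5) (hab : a ≠ b) (k : ℕ) (m : Fin 5 →₀ ℕ)
    (h : m a + m b < k) : monomial m (1 : K) ∉ (mIdeal K {a, b}) ^ k := by
  intro hm
  have h1 : Ideal.map (stmt12Phi K a b) (mIdeal K {a, b}) ≤ Ideal.span {Polynomial.X} := by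
    rw [mIdeal, Ideal.map_span, ← Set.image_comp]
    apply Ideal.span_le.2
    rintro _ ⟨i, hi, rfl⟩
    simp only [Function.comp_apply, stmt12Phi, aeval_X]
    rcases hi with rfl | rfl <;> simp [Ideal.mem_span_singleton]
  have h2 : stmt12Phi K a b (monomial m (1 : K)) ∈ Ideal.span {(Polynomial.X : Polynomial K) ^ k} := by
    rw [← Ideal.span_singleton_pow]
    have h3 : stmt12Phi K a b (monomial m (1 : K))
        ∈ Ideal.map (stmt12Phi K a b) ((mIdeal K {a, b}) ^ k) :=
      Ideal.mem_map_of_mem _ hm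
    rw [Ideal.map_pow] at h3
    exact Ideal.pow_right_mono h1 k h3
  rw [stmt12_phi_monomial a b hab, Ideal.mem_span_singleton] at h2
  have := Polynomial.natDegree_le_of_dvd h2 (pow_ne_zero _ Polynomial.X_ne_zero)
  simp [Polynomial.natDegree_X_pow] at this
  omega

lemma stmt12_X_mem {n : ℕ} {J : Set (Fin n)} {a : Fin n} (h : a ∈ J) :
    (X a : MvPolynomial (Fin n) K) ∈ mIdeal K J :=
  Ideal.subset_span ⟨a, h, rfl⟩

lemma stmt12_memI_deg (m : Fin 5 →₀ ℕ)
    (hm : monomial m (1 : K) ∈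
      (mIdeal K ({0, 1} : Set (Fin 5))) ^ 2 ⊓ (mIdeal K ({1, 2} : Set (Fin 5))) ^ 2 ⊓ (mIdeal K ({2, 3} : Set (Fin 5))) ^ 2 ⊓ mIdeal K ({3, 4} : Set (Fin 5))) :
    2 ≤ m 0 + m 1 ∧ 2 ≤ m 1 + m 2 ∧ 2 ≤ m 2 + m 3 ∧ 1 ≤ m 3 + m 4 := by
  obtain ⟨⟨⟨h1, h2⟩, h3⟩, h4⟩ := hm
  refine ⟨?_, ?_, ?_, ?_⟩ <;> by_contra h
  · exact stmt12_not_mem_pow 0 1 (by decide) 2 m (by omega) h1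
  · exact stmt12_not_mem_pow 1 2 (by decide) 2 m (by omega) h2
  · exact stmt12_not_mem_pow 2 3 (by decide) 2 m (by omega) h3
  · exact stmt12_not_mem_pow 3 4 (by decide) 1 m (by omega) (by rw [pow_one]; exact h4)

lemma stmt12_u_eq :
    (monomial (Finsupp.single 0 1 + Finsupp.single 1 1 + Finsupp.single 2 1 + Finsupp.single 3 1)
      (1 : K)) = (X 0 * X 1 * X 2 * X 3 : MvPolynomial (Fin 5) K) := by
  simp [X, monomial_mul]

lemma stmt12_v_eq :
    (monomial (Finsupp.single 1 2 + Finsupp.single 3 2) (1 : K)) = (X 1 ^ 2 * X 3 ^ 2 : MvPolynomial (Fin 5) K) := by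
  simp [X_pow_eq_monomial, monomial_mul]

lemma stmt12_u_mingen :
    MinGen ((mIdeal K ({0, 1} : Set (Fin 5))) ^ 2 ⊓ (mIdeal K ({1, 2} : Set (Fin 5))) ^ 2 ⊓ (mIdeal K ({2, 3} : Set (Fin 5))) ^ 2 ⊓ mIdeal K ({3, 4} : Set (Fin 5)))
      (Finsupp.single 0 1 + Finsupp.single 1 1 + Finsupp.single 2 1 + Finsupp.single 3 1) := by
  constructor
  · rw [stmt12_u_eq]
    refine ⟨⟨⟨?_, ?_⟩, ?_⟩, ?_⟩
    · have h : (X 0 * X 1 * X 2 * X 3 : MvPolynomial (Fin 5) K) = X 2 * X 3 * (X 0 * X 1) := by ring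
      rw [h, sq]
      exact Ideal.mul_mem_left _ _
        (Ideal.mul_mem_mul (stmt12_X_mem (by simp)) (stmt12_X_mem (by simp)))
    · have h : (X 0 * X 1 * X 2 * X 3 : MvPolynomial (Fin 5) K) = X 0 * X 3 * (X 1 * X 2) := by ring
      rw [h, sq]
      exact Ideal.mul_mem_left _ _
        (Ideal.mul_mem_mul (stmt12_X_mem (by simp)) (stmt12_X_mem (by simp)))
    · have h : (X 0 * X 1 * X 2 * X 3 : MvPolynomial (Fin 5) K) = X 0 * X 1 * (X 2 * X 3) := by ring
      rw [h, sq]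
      exact Ideal.mul_mem_left _ _
        (Ideal.mul_mem_mul (stmt12_X_mem (by simp)) (stmt12_X_mem (by simp)))
    · exact Ideal.mul_mem_left _ _ (stmt12_X_mem (by simp))
  · intro m' hle hne hmem
    have hc := stmt12_memI_deg m' hmem
    have hb := Finsupp.le_def.1 hle
    have h0 := hb 0; have h1 := hb 1; have h2 := hb 2; have h3 := hb 3; have h4 := hb 4
    simp [Finsupp.single_apply] at h0 h1 h2 h3 h4
    apply hne
    refine le_antisymm hle (Finsupp.le_def.2 ?_)
    intro i
    fin_cases i <;> simp [Finsupp.single_apply] <;> omega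

lemma stmt12_v_mingen :
    MinGen ((mIdeal K ({0, 1} : Set (Fin 5))) ^ 2 ⊓ (mIdeal K ({1, 2} : Set (Fin 5))) ^ 2 ⊓ (mIdeal K ({2, 3} : Set (Fin 5))) ^ 2 ⊓ mIdeal K ({3, 4} : Set (Fin 5)))
      (Finsupp.single 1 2 + Finsupp.single 3 2) := by
  constructor
  · rw [stmt12_v_eq]
    refine ⟨⟨⟨?_, ?_⟩, ?_⟩, ?_⟩
    · have h : (X 1 ^ 2 * X 3 ^ 2 : MvPolynomial (Fin 5) K) = X 3 ^ 2 * X 1 ^ 2 := by ring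
      rw [h]
      exact Ideal.mul_mem_left _ _ (Ideal.pow_mem_pow (stmt12_X_mem (by simp)) 2)
    · have h : (X 1 ^ 2 * X 3 ^ 2 : MvPolynomial (Fin 5) K) = X 3 ^ 2 * X 1 ^ 2 := by ring
      rw [h]
      exact Ideal.mul_mem_left _ _ (Ideal.pow_mem_pow (stmt12_X_mem (by simp)) 2)
    · exact Ideal.mul_mem_left _ _ (Ideal.pow_mem_pow (stmt12_X_mem (by simp)) 2)
    · have h : (X 1 ^ 2 * X 3 ^ 2 : MvPolynomial (Fin 5) K) = X 1 ^ 2 * X 3 * X 3 := by ring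
      rw [h]
      exact Ideal.mul_mem_left _ _ (stmt12_X_mem (by simp))
  · intro m' hle hne hmem
    have hc := stmt12_memI_deg m' hmem
    have hb := Finsupp.le_def.1 hle
    have h0 := hb 0; have h1 := hb 1; have h2 := hb 2; have h3 := hb 3; have h4 := hb 4
    simp [Finsupp.single_apply] at h0 h1 h2 h3 h4
    apply hne
    refine le_antisymm hle (Finsupp.le_def.2 ?_)
    intro i
    fin_cases i <;> simp [Finsupp.single_apply] <;> omega

lemma stmt12_w1_notmem :
    (X 0 * X 1 ^ 2 * X 3 : MvPolynomial (Fin 5) K) ∉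
      (mIdeal K ({0, 1} : Set (Fin 5))) ^ 2 ⊓ (mIdeal K ({1, 2} : Set (Fin 5))) ^ 2 ⊓ (mIdeal K ({2, 3} : Set (Fin 5))) ^ 2 ⊓ mIdeal K ({3, 4} : Set (Fin 5)) := by
  intro hmem
  have he : (X 0 * X 1 ^ 2 * X 3 : MvPolynomial (Fin 5) K)
      = monomial (Finsupp.single 0 1 + Finsupp.single 1 2 + Finsupp.single 3 1) 1 := by
    simp [X, monomial_mul, monomial_pow, Finsupp.smul_single, one_pow]
  rw [he] at hmem
  have hc := stmt12_memI_deg _ hmem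
  simp [Finsupp.single_apply] at hc

lemma stmt12_w2_notmem :
    (X 0 * X 1 * X 3 ^ 2 : MvPolynomial (Fin 5) K) ∉
      (mIdeal K ({0, 1} : Set (Fin 5))) ^ 2 ⊓ (mIdeal K ({1, 2} : Set (Fin 5))) ^ 2 ⊓ (mIdeal K ({2, 3} : Set (Fin 5))) ^ 2 ⊓ mIdeal K ({3, 4} : Set (Fin 5)) := by
  intro hmem
  have he : (X 0 * X 1 * X 3 ^ 2 : MvPolynomial (Fin 5) K)
      = monomial (Finsupp.single 0 1 + Finsupp.single 1 1 + Finsupp.single 3 2) 1 := by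
    simp [X, monomial_mul, monomial_pow, Finsupp.smul_single, one_pow]
  rw [he] at hmem
  have hc := stmt12_memI_deg _ hmem
  simp [Finsupp.single_apply] at hc

lemma stmt12_not_npde :
    ¬ NPDE ((mIdeal K ({0, 1} : Set (Fin 5))) ^ 2 ⊓ (mIdeal K ({1, 2} : Set (Fin 5))) ^ 2 ⊓ (mIdeal K ({2, 3} : Set (Fin 5))) ^ 2 ⊓ mIdeal K ({3, 4} : Set (Fin 5))) := by
  intro h
  obtain ⟨j, hj, hmem⟩ := h _ _ stmt12_u_mingen stmt12_v_mingen
    (by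
      rw [expDeg, expDeg, Finsupp.sum_fintype _ _ (fun i => rfl),
        Finsupp.sum_fintype _ _ (fun i => rfl), Fin.sum_univ_five, Fin.sum_univ_five]
      simp [Finsupp.single_apply])
    0 (by simp [Finsupp.single_apply])
  have hc := stmt12_memI_deg _ hmem
  fin_cases j <;>
    simp [Finsupp.tsub_apply, Finsupp.single_apply] at hj hc

end Stmt12Aux

theorem stmt12 (K : Type*) [Field K] :
    let I : Ideal (MvPolynomial (Fin 5) K) :=
      (mIdeal K {0, 1}) ^ 2 ⊓ (mIdeal K {1, 2}) ^ 2 ⊓ (mIdeal K {2, 3}) ^ 2 ⊓ mIdeal K {3, 4}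
    let u : Fin 5 →₀ ℕ :=
      Finsupp.single 0 1 + Finsupp.single 1 1 + Finsupp.single 2 1 + Finsupp.single 3 1
    let v : Fin 5 →₀ ℕ := Finsupp.single 1 2 + Finsupp.single 3 2
    ¬ NPDE I ∧ MinGen I u ∧ MinGen I v ∧ v 0 < u 0 ∧
    (X 0 * X 1 ^ 2 * X 3 : MvPolynomial (Fin 5) K) ∉ I ∧
    (X 0 * X 1 * X 3 ^ 2 : MvPolynomial (Fin 5) K) ∉ I := by
  intro I u v
  exact ⟨stmt12_not_npde, stmt12_u_mingen, stmt12_v_mingen,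
    by simp [u, v, Finsupp.single_apply], stmt12_w1_notmem, stmt12_w2_notmem⟩
end

section
/- Let I = (x_1,x_2) ∩ (x_2,x_3) ∩ (x_3,x_4) ∩ (x_4,x_5) ∩ (x_5,x_6) in K[x_1,...,x_6], the vertex cover ideal of a path on six vertices with five edges. Then I does not satisfy the non-pure dual exchange property: for u = x_1x_3x_5 and v = x_2x_4x_5 in G(I), deg_{x_1}(v) < deg_{x_1}(u), but x_1x_2x_5 ∉ I and x_1x_4x_5 ∉ I. -/
open MvPolynomial

section Aux

variable {K : Type*} [Field K]

lemma monomial_mem_span_pair {n : ℕ} (a b : Fin n) (m : Fin n →₀ ℕ) :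
    (monomial m (1 : K)) ∈ Ideal.span {X a, X b} ↔ 0 < m a ∨ 0 < m b := by
  constructor
  · intro hmem
    by_contra hc
    push_neg at hc
    obtain ⟨ha, hb⟩ := hc
    simp only [Nat.le_zero] at ha hb
    rw [Ideal.mem_span_pair] at hmem
    obtain ⟨p, q, hpq⟩ := hmem
    have := congrArg (eval (fun i => if i = a ∨ i = b then (0 : K) else 1)) hpq
    simp only [map_add, map_mul, eval_X, eval_monomial, one_mul, eq_self_iff_true,
      true_or, or_true, if_true, mul_zero, add_zero, zero_add] at this
    have hprod : (m.prod fun i e => (if i = a ∨ i = b then (0 : K) else 1) ^ e) = 1 := by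
      rw [Finsupp.prod]
      apply Finset.prod_eq_one
      intro i hi
      rw [Finsupp.mem_support_iff] at hi
      have hia : i ≠ a := fun h => by simp [h, ha] at hi
      have hib : i ≠ b := fun h => by simp [h, hb] at hi
      rw [if_neg (by tauto), one_pow]
    rw [hprod] at this
    exact one_ne_zero this.symm
  · intro h
    have key : ∀ c : Fin n, 0 < m c → X c ∈ ({X a, X b} : Set (MvPolynomial (Fin n) K)) →
        (monomial m (1 : K)) ∈ Ideal.span {X a, X b} := by
      intro c hc hmem
      have hle : Finsupp.single c 1 ≤ m := by
        rw [Finsupp.single_le_iff]; exact hc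
      have : (monomial m (1 : K)) = monomial (m - Finsupp.single c 1) 1 * X c := by
        rw [X, monomial_mul, mul_one, tsub_add_cancel_of_le hle]
      rw [this]
      exact Ideal.mul_mem_left _ _ (Ideal.subset_span hmem)
    rcases h with h | h
    · exact key a h (Set.mem_insert _ _)
    · exact key b h (Set.mem_insert_of_mem _ rfl)

lemma monomial_mem_mIdeal_pair {n : ℕ} (a b : Fin n) (m : Fin n →₀ ℕ) :
    (monomial m (1 : K)) ∈ mIdeal K {a, b} ↔ 0 < m a ∨ 0 < m b := by
  rw [mIdeal, Set.image_pair]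
  exact monomial_mem_span_pair a b m

end Aux

theorem stmt13 (K : Type*) [Field K] :
    let I : Ideal (MvPolynomial (Fin 6) K) :=
      mIdeal K {0, 1} ⊓ mIdeal K {1, 2} ⊓ mIdeal K {2, 3} ⊓ mIdeal K {3, 4} ⊓ mIdeal K {4, 5}
    let u : Fin 6 →₀ ℕ := Finsupp.single 0 1 + Finsupp.single 2 1 + Finsupp.single 4 1
    let v : Fin 6 →₀ ℕ := Finsupp.single 1 1 + Finsupp.single 3 1 + Finsupp.single 4 1
    ¬ NPDE I ∧ MinGen I u ∧ MinGen I v ∧ v 0 < u 0 ∧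
    (X 0 * X 1 * X 4 : MvPolynomial (Fin 6) K) ∉ I ∧
    (X 0 * X 3 * X 4 : MvPolynomial (Fin 6) K) ∉ I :=  by
  intro I u v
  have hu : ∀ i, u i = if i = 0 then 1 else if i = 2 then 1 else if i = 4 then 1 else 0 := by
    intro i
    simp only [u, Finsupp.add_apply, Finsupp.single_apply]
    fin_cases i <;> rfl
  have hv : ∀ i, v i = if i = 1 then 1 else if i = 3 then 1 else if i = 4 then 1 else 0 := by
    intro i
    simp only [v, Finsupp.add_apply, Finsupp.single_apply]
    fin_cases i <;> rfl
  have memI : ∀ m : Fin 6 →₀ ℕ, (monomial m (1 : K)) ∈ I ↔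
      (0 < m 0 ∨ 0 < m 1) ∧ (0 < m 1 ∨ 0 < m 2) ∧ (0 < m 2 ∨ 0 < m 3) ∧
      (0 < m 3 ∨ 0 < m 4) ∧ (0 < m 4 ∨ 0 < m 5) := by
    intro m
    simp only [I, Ideal.mem_inf, monomial_mem_mIdeal_pair]
    tauto
  have huI : MinGen I u := by
    constructor
    · rw [memI]; simp [hu]
    · intro m' hle hne hm
      rw [memI] at hm
      have hle' : ∀ i, m' i ≤ u i := fun i => hle i
      have h0 := hle' 0
      have h1 := hle' 1
      have h2 := hle' 2
      have h3 := hle' 3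
      have h4 := hle' 4
      have h5 := hle' 5
      simp [hu] at h0 h1 h2 h3 h4 h5
      apply hne
      ext i
      rw [hu]
      fin_cases i <;> simp <;> omega
  have hvI : MinGen I v := by
    constructor
    · rw [memI]; simp [hv]
    · intro m' hle hne hm
      rw [memI] at hm
      have hle' : ∀ i, m' i ≤ v i := fun i => hle i
      have h0 := hle' 0
      have h1 := hle' 1
      have h2 := hle' 2
      have h3 := hle' 3
      have h4 := hle' 4
      have h5 := hle' 5
      simp [hv] at h0 h1 h2 h3 h4 h5
      apply hne
      ext i
      rw [hv]
      fin_cases i <;> simp <;> omega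
  have hdeg : expDeg u ≤ expDeg v := by
    have h1 : expDeg u = 3 := by
      rw [expDeg, Finsupp.sum_fintype _ _ (fun _ => rfl), Fin.sum_univ_six]
      simp [hu]
    have h2 : expDeg v = 3 := by
      rw [expDeg, Finsupp.sum_fintype _ _ (fun _ => rfl), Fin.sum_univ_six]
      simp [hv]
    omega
  have hv0u0 : v 0 < u 0 := by rw [hu, hv]; decide
  have hXm1 : (X 0 * X 1 * X 4 : MvPolynomial (Fin 6) K) =
      monomial (Finsupp.single 0 1 + Finsupp.single 1 1 + Finsupp.single 4 1) 1 := by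
    rw [X, X, X, monomial_mul, monomial_mul, mul_one, mul_one]
  have hXm2 : (X 0 * X 3 * X 4 : MvPolynomial (Fin 6) K) =
      monomial (Finsupp.single 0 1 + Finsupp.single 3 1 + Finsupp.single 4 1) 1 := by
    rw [X, X, X, monomial_mul, monomial_mul, mul_one, mul_one]
  have hm1 : ∀ i : Fin 6, (Finsupp.single 0 1 + Finsupp.single 1 1 + Finsupp.single 4 1 : Fin 6 →₀ ℕ) i
      = if i = 0 then 1 else if i = 1 then 1 else if i = 4 then 1 else 0 := by
    intro i
    simp only [Finsupp.add_apply, Finsupp.single_apply]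
    fin_cases i <;> rfl
  have hm2 : ∀ i : Fin 6, (Finsupp.single 0 1 + Finsupp.single 3 1 + Finsupp.single 4 1 : Fin 6 →₀ ℕ) i
      = if i = 0 then 1 else if i = 3 then 1 else if i = 4 then 1 else 0 := by
    intro i
    simp only [Finsupp.add_apply, Finsupp.single_apply]
    fin_cases i <;> rfl
  have hni1 : (X 0 * X 1 * X 4 : MvPolynomial (Fin 6) K) ∉ I := by
    rw [hXm1, memI]
    simp [hm1]
  have hni2 : (X 0 * X 3 * X 4 : MvPolynomial (Fin 6) K) ∉ I := by
    rw [hXm2, memI]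
    simp [hm2]
  refine ⟨?_, huI, hvI, hv0u0, hni1, hni2⟩
  intro hN
  obtain ⟨j, hj, hmem⟩ := hN u v huI hvI hdeg 0 hv0u0
  have hval : ∀ i : Fin 6, (v + Finsupp.single (0 : Fin 6) 1 - Finsupp.single j 1 : Fin 6 →₀ ℕ) i =
      v i + (if i = 0 then 1 else 0) - (if i = j then 1 else 0) := by
    intro i
    rw [Finsupp.tsub_apply, Finsupp.add_apply, Finsupp.single_apply, Finsupp.single_apply]
    simp [eq_comm]
  rw [memI] at hmem
  rw [hu, hv] at hj
  have hj' : j = 1 ∨ j = 3 := by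
    clear hmem hval
    fin_cases j
    · simp at hj
    · exact Or.inl rfl
    · simp at hj
    · exact Or.inr rfl
    · simp at hj
    · simp at hj
  rcases hj' with rfl | rfl
  · have a1 : (v + Finsupp.single (0 : Fin 6) 1 - Finsupp.single 1 1 : Fin 6 →₀ ℕ) 1 = 0 := by
      rw [hval 1, hv]; decide
    have a2 : (v + Finsupp.single (0 : Fin 6) 1 - Finsupp.single 1 1 : Fin 6 →₀ ℕ) 2 = 0 := by
      rw [hval 2, hv]; decide
    omega
  · have a2 : (v + Finsupp.single (0 : Fin 6) 1 - Finsupp.single 3 1 : Fin 6 →₀ ℕ) 2 = 0 := by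
      rw [hval 2, hv]; decide
    have a3 : (v + Finsupp.single (0 : Fin 6) 1 - Finsupp.single 3 1 : Fin 6 →₀ ℕ) 3 = 0 := by
      rw [hval 3, hv]; decide
    omega
end
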